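/- arXiv:2206.15461 — 3 statements merged into one kernel-verified Lean document; each statement's English description precedes it below -/
import Mathlib

section
/- Let (W, S) be a finite Coxeter system with longest element ω∘, and let SC(Q, π) be a subword complex with Dem(Q) = π (i.e., a spherical subword complex). If Q' is the word obtained by appending to Q a reduced word P for π⁻¹ω∘, then the facets of SC(Q', ω∘) coincide with the facets of SC(Q, π); in particular SC(Q, π) ≅ SC(Q', ω∘). -/
/-- The word obtained from `Q` (with positions numbered `1, …, Q.length`) by deleting the
letters at the positions in `I`. -/
def subwordDel {B : Type*} (Q : List B) (I : Finset ℕ) : List B :=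
  ((Q.zipIdx 1).filter (fun p => p.2 ∉ I)).map Prod.fst

/-- `I ⊆ {1, …, Q.length}` is a facet of the subword complex `SC(Q, π)`:
the complementary subword is a reduced expression for `π`. -/
def IsSCFacet {B W : Type*} [Group W] {M : CoxeterMatrix B} (cs : CoxeterSystem M W)
    (Q : List B) (π : W) (I : Finset ℕ) : Prop :=
  I ⊆ Finset.Icc 1 Q.length ∧ cs.IsReduced (subwordDel Q I) ∧
    cs.wordProd (subwordDel Q I) = π

/-- The subword complex `SC(Q, π)`: all subsets of facets. -/
def subwordCpx {B W : Type*} [Group W] {M : CoxeterMatrix B} (cs : CoxeterSystem M W)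
    (Q : List B) (π : W) : Set (Finset ℕ) :=
  {J | ∃ I : Finset ℕ, IsSCFacet cs Q π I ∧ J ⊆ I}

/-- The costar of a face `I` of `SC(Q, π)`: the subcomplex generated by facets
not containing `I`. -/
def subwordCostar {B W : Type*} [Group W] {M : CoxeterMatrix B} (cs : CoxeterSystem M W)
    (Q : List B) (π : W) (I : Finset ℕ) : Set (Finset ℕ) :=
  {J | ∃ F : Finset ℕ, IsSCFacet cs Q π F ∧ J ⊆ F ∧ ¬ I ⊆ F}

/-- The Demazure product of a word. -/
noncomputable def Dem {B W : Type*} [Group W] {M : CoxeterMatrix B}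
    (cs : CoxeterSystem M W) (Q : List B) : W :=
  Q.foldl (fun μ i => if cs.length μ < cs.length (μ * cs.simple i) then μ * cs.simple i else μ) 1

/-- Bruhat order: `u ≤ w` iff `u` is the product of a subword of some reduced word for `w`. -/
def BruhatLE {B W : Type*} [Group W] {M : CoxeterMatrix B} (cs : CoxeterSystem M W)
    (u w : W) : Prop :=
  ∃ ω : List B, cs.IsReduced ω ∧ cs.wordProd ω = w ∧
    ∃ υ : List B, υ.Sublist ω ∧ cs.wordProd υ = u


set_option linter.unusedSectionVars false

namespace SWAux

open List

/-- Auxiliary monoid for the parity ("sign") homomorphism of a Coxeter system. -/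
structure EW (W : Type*) where
  w : W
  f : W → ZMod 2

variable {B W : Type*} [Group W] {M : CoxeterMatrix B} (cs : CoxeterSystem M W)

instance : Monoid (EW W) where
  mul a b := ⟨a.w * b.w, fun t => a.f (b.w * t * b.w⁻¹) + b.f t⟩
  one := ⟨1, fun _ => 0⟩
  mul_assoc := by
    rintro ⟨aw, af⟩ ⟨bw, bf⟩ ⟨cw, cf⟩
    refine congrArg₂ EW.mk (mul_assoc _ _ _) ?_
    funext t
    show af (bw * (cw * t * cw⁻¹) * bw⁻¹) + bf (cw * t * cw⁻¹) + cf t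
       = af ((bw * cw) * t * (bw * cw)⁻¹) + (bf (cw * t * cw⁻¹) + cf t)
    rw [add_assoc]
    congr 2
    simp [mul_assoc, mul_inv_rev]
  one_mul a := by
    show EW.mk _ _ = a
    cases a with
    | mk w f => refine congrArg₂ EW.mk (one_mul _) ?_; funext t; show (0 : ZMod 2) + f t = f t; rw [zero_add]
  mul_one a := by
    show EW.mk _ _ = a
    cases a with
    | mk w f =>
      refine congrArg₂ EW.mk (mul_one _) ?_
      funext t
      show f (1 * t * 1⁻¹) + 0 = f t
      simp

theorem EW.mul_w (a b : EW W) : (a * b).w = a.w * b.w := rfl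
theorem EW.mul_f (a b : EW W) (t : W) : (a * b).f t = a.f (b.w * t * b.w⁻¹) + b.f t := rfl
theorem EW.one_w : (1 : EW W).w = 1 := rfl
theorem EW.one_f (t : W) : (1 : EW W).f t = 0 := rfl

variable [DecidableEq W]

/-- The generator images for the parity homomorphism. -/
def gg (i : B) : EW W := ⟨cs.simple i, fun t => if t = cs.simple i then 1 else 0⟩

/-- The parity of the number of occurrences of `t` in the right inversion sequence of `ω`. -/
def nu (ω : List B) (t : W) : ZMod 2 :=
  ((cs.rightInvSeq ω).map (fun x => if x = t then (1 : ZMod 2) else 0)).sum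

theorem ris_cons (i : B) (ω : List B) :
    cs.rightInvSeq (i :: ω) =
      ((cs.wordProd ω)⁻¹ * cs.simple i * cs.wordProd ω) :: cs.rightInvSeq ω := rfl

theorem nu_nil (t : W) : nu cs [] t = 0 := rfl

theorem nu_cons (i : B) (ω : List B) (t : W) :
    nu cs (i :: ω) t =
      (if (cs.wordProd ω)⁻¹ * cs.simple i * cs.wordProd ω = t then 1 else 0) + nu cs ω t := by
  simp [nu, ris_cons]

theorem prod_map_gg (ω : List B) :
    (ω.map (gg cs)).prod = ⟨cs.wordProd ω, fun t => nu cs ω t⟩ := by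
  induction ω with
  | nil =>
    refine congrArg₂ EW.mk ?_ ?_
    · simp
    · funext t; simp [nu_nil]
  | cons i ω ih =>
    rw [List.map_cons, List.prod_cons, ih]
    refine congrArg₂ EW.mk ?_ ?_
    · show cs.simple i * cs.wordProd ω = cs.wordProd (i :: ω)
      rw [cs.wordProd_cons]
    · funext t
      show (if cs.wordProd ω * t * (cs.wordProd ω)⁻¹ = cs.simple i then 1 else 0) + nu cs ω t
          = nu cs (i :: ω) t
      rw [nu_cons]
      congr 1
      refine if_congr ?_ rfl rfl
      constructor
      · intro h
        rw [← h]; group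
      · intro h
        rw [← h]; group

/-- The word `i j i j …` (with `2n` letters) as a plain concatenation of `n` copies of `[i, j]`. -/
def myWord (i j : B) : ℕ → List B
  | 0 => []
  | n + 1 => i :: j :: myWord i j n

theorem wordProd_myWord (i j : B) (n : ℕ) :
    cs.wordProd (myWord i j n) = (cs.simple i * cs.simple j) ^ n := by
  induction n with
  | zero => simp [myWord]
  | succ n ih =>
    rw [myWord, cs.wordProd_cons, cs.wordProd_cons, ih, pow_succ']
    rw [mul_assoc]

theorem sj_mul_zpow (i j : B) (n : ℕ) :
    cs.simple j * (cs.simple i * cs.simple j) ^ n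
      = (cs.simple j * cs.simple i) ^ n * cs.simple j := by
  have h : SemiconjBy (cs.simple j) (cs.simple i * cs.simple j) (cs.simple j * cs.simple i) :=
    (mul_assoc _ _ _).symm
  exact h.pow_right n

theorem ris_myWord (i j : B) (n : ℕ) :
    cs.rightInvSeq (myWord i j n)
      = (List.range (2 * n)).reverse.map
          (fun e => (cs.simple j * cs.simple i) ^ e * cs.simple j) := by
  induction n with
  | zero => simp [myWord]
  | succ n ih =>
    have hrange : (List.range (2 * (n + 1))).reverse
        = (2 * n + 1) :: (2 * n) :: (List.range (2 * n)).reverse := by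
      have h1 : 2 * (n + 1) = (2 * n + 1) + 1 := by omega
      rw [h1, List.range_succ, List.range_succ]
      simp
    rw [myWord, ris_cons, ris_cons, ih, hrange, List.map_cons, List.map_cons]
    have hz : cs.wordProd (myWord i j n) = (cs.simple i * cs.simple j) ^ n :=
      wordProd_myWord cs i j n
    have hzinv : ((cs.simple i * cs.simple j) ^ n)⁻¹ = (cs.simple j * cs.simple i) ^ n := by
      rw [← inv_pow, mul_inv_rev, cs.inv_simple, cs.inv_simple]
    congr 1
    · -- head: (π (j :: myWord n))⁻¹ * s i * π (j :: myWord n) = y^(2n+1) * s j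
      rw [cs.wordProd_cons, hz]
      rw [mul_inv_rev, hzinv, cs.inv_simple]
      calc (cs.simple j * cs.simple i) ^ n * cs.simple j * cs.simple i *
            (cs.simple j * ((cs.simple i * cs.simple j) ^ n))
          = (cs.simple j * cs.simple i) ^ n * (cs.simple j * cs.simple i) *
            (cs.simple j * (cs.simple i * cs.simple j) ^ n) := by
            simp [mul_assoc]
        _ = (cs.simple j * cs.simple i) ^ n * (cs.simple j * cs.simple i) *
            ((cs.simple j * cs.simple i) ^ n * cs.simple j) := by rw [sj_mul_zpow]
        _ = (cs.simple j * cs.simple i) ^ (2 * n + 1) * cs.simple j := by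
            rw [← pow_succ, ← mul_assoc, ← pow_add]
            congr 2
            omega
    congr 1
    · -- second: (π (myWord n))⁻¹ * s j * π (myWord n) = y^(2n) * s j
      rw [hz, hzinv, mul_assoc]
      calc (cs.simple j * cs.simple i) ^ n * (cs.simple j * (cs.simple i * cs.simple j) ^ n)
          = (cs.simple j * cs.simple i) ^ n * ((cs.simple j * cs.simple i) ^ n * cs.simple j) := by
            rw [sj_mul_zpow]
        _ = (cs.simple j * cs.simple i) ^ (2 * n) * cs.simple j := by
            rw [← mul_assoc, ← pow_add]
            congr 2
            omega

theorem nu_myWord (i j : B) (t : W) : nu cs (myWord i j (M i j)) t = 0 := by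
  set m := M i j with hm
  set y := cs.simple j * cs.simple i with hy
  have hym : y ^ m = 1 := cs.simple_mul_simple_pow' i j
  rw [nu, ris_myWord, List.map_map, List.map_reverse, List.sum_reverse]
  rw [show 2 * m = m + m by omega, List.range_add, List.map_append, List.sum_append]
  have : (List.map ((fun x => if x = t then (1 : ZMod 2) else 0) ∘
        fun e => y ^ e * cs.simple j) (List.map (fun x => m + x) (List.range m)))
      = (List.map ((fun x => if x = t then (1 : ZMod 2) else 0) ∘
        fun e => y ^ e * cs.simple j) (List.range m)) := by
    rw [List.map_map]
    refine List.map_congr_left ?_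
    intro e _
    simp only [Function.comp_apply, pow_add, hym, one_mul]
  rw [this, CharTwo.add_self_eq_zero]

theorem isLiftable_gg : M.IsLiftable (gg cs) := by
  intro i j
  have key : ∀ n : ℕ, (gg cs i * gg cs j) ^ n = ((myWord i j n).map (gg cs)).prod := by
    intro n
    induction n with
    | zero => simp [myWord]
    | succ n ih => rw [pow_succ', ih, myWord, List.map_cons, List.map_cons, List.prod_cons,
        List.prod_cons, mul_assoc]
  rw [key, prod_map_gg]
  refine congrArg₂ EW.mk ?_ ?_
  · rw [wordProd_myWord]
    exact cs.simple_mul_simple_pow i j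
  · funext t
    rw [nu_myWord]

/-- The parity homomorphism. -/
def phi : W →* EW W := cs.lift ⟨gg cs, isLiftable_gg cs⟩

theorem phi_simple (i : B) : phi cs (cs.simple i) = gg cs i :=
  cs.lift_apply_simple (isLiftable_gg cs) i

theorem phi_wordProd (ω : List B) : phi cs (cs.wordProd ω) = ⟨cs.wordProd ω, fun t => nu cs ω t⟩ := by
  have : phi cs (cs.wordProd ω) = (ω.map (gg cs)).prod := by
    induction ω with
    | nil => simp
    | cons i ω ih => rw [cs.wordProd_cons, map_mul, phi_simple, ih, List.map_cons, List.prod_cons]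
  rw [this, prod_map_gg]

/-- Parity of the number of times `t` occurs in the inversion sequence of any word for `w`. -/
def nuw (w t : W) : ZMod 2 := ((phi cs) w).f t

theorem nuw_eq_nu {ω : List B} {w : W} (hω : cs.wordProd ω = w) (t : W) :
    nuw cs w t = nu cs ω t := by
  subst hω
  rw [nuw, phi_wordProd]

theorem phi_w (w : W) : (phi cs w).w = w := by
  obtain ⟨ω, hω⟩ := cs.wordProd_surjective w
  subst hω
  rw [phi_wordProd]

theorem nuw_mul (u v t : W) :
    nuw cs (u * v) t = nuw cs u (v * t * v⁻¹) + nuw cs v t := by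
  rw [nuw, map_mul, EW.mul_f, phi_w]
  rfl

theorem mem_of_sum_ind_ne_zero {L : List W} {t : W}
    (h : (L.map (fun x => if x = t then (1 : ZMod 2) else 0)).sum ≠ 0) : t ∈ L := by
  by_contra ht
  apply h
  apply List.sum_eq_zero
  intro x hx
  obtain ⟨a, ha, rfl⟩ := List.mem_map.mp hx
  rw [if_neg]
  rintro rfl
  exact ht ha

theorem sum_ind_of_nodup {L : List W} {t : W} (hL : L.Nodup) (ht : t ∈ L) :
    (L.map (fun x => if x = t then (1 : ZMod 2) else 0)).sum = 1 := by
  induction L with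
  | nil => cases ht
  | cons a L ih =>
    rw [List.map_cons, List.sum_cons]
    rcases List.mem_cons.mp ht with rfl | htL
    · rw [if_pos rfl]
      have : t ∉ L := (List.nodup_cons.mp hL).1
      have h0 : (L.map (fun x => if x = t then (1 : ZMod 2) else 0)).sum = 0 := by
        apply List.sum_eq_zero
        intro x hx
        obtain ⟨b, hb, rfl⟩ := List.mem_map.mp hx
        rw [if_neg]
        rintro rfl
        exact this hb
      rw [h0, add_zero]
    · have hat : a ≠ t := by rintro rfl; exact (List.nodup_cons.mp hL).1 htL
      rw [if_neg hat, zero_add]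
      exact ih (List.nodup_cons.mp hL).2 htL

/-- Sums of indicator functions agree if membership agrees position-wise. -/
theorem sum_ind_congr {a b : W} : ∀ {L L' : List W}, L.length = L'.length →
    (∀ k, k < L.length → (L.getD k 1 = a ↔ L'.getD k 1 = b)) →
    (L.map (fun x => if x = a then (1 : ZMod 2) else 0)).sum
      = (L'.map (fun x => if x = b then (1 : ZMod 2) else 0)).sum := by
  intro L
  induction L with
  | nil =>
    intro L' hlen _
    rw [List.eq_nil_of_length_eq_zero hlen.symm]
    rfl
  | cons x L ih =>
    intro L' hlen h
    match L' with
    | [] => simp at hlen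
    | y :: L' =>
      rw [List.map_cons, List.map_cons, List.sum_cons, List.sum_cons]
      have h0 := h 0 (by simp)
      simp only [List.getD_cons_zero] at h0
      have htail : (L.map (fun x => if x = a then (1 : ZMod 2) else 0)).sum
          = (L'.map (fun x => if x = b then (1 : ZMod 2) else 0)).sum := by
        refine ih (by simpa using hlen) ?_
        intro k hk
        have := h (k + 1) (by simpa using Nat.succ_lt_succ hk)
        simpa using this
      rw [htail]
      congr 1
      by_cases hx : x = a
      · rw [if_pos hx, if_pos (h0.mp hx)]
      · rw [if_neg hx, if_neg (fun hy => hx (h0.mpr hy))]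

theorem ris_append (ω ω' : List B) :
    cs.rightInvSeq (ω ++ ω') =
      (cs.rightInvSeq ω).map (fun x => (cs.wordProd ω')⁻¹ * x * cs.wordProd ω')
        ++ cs.rightInvSeq ω' := by
  induction ω with
  | nil => simp
  | cons i ω ih =>
    rw [List.cons_append, ris_cons, ris_cons, ih, List.map_cons, List.cons_append]
    congr 1
    rw [cs.wordProd_append]
    simp [mul_assoc, mul_inv_rev]

theorem conj_eq_iff (a x y : W) : a⁻¹ * x * a = y ↔ x = a * y * a⁻¹ := by
  constructor
  · intro h; rw [← h]; group
  · intro h; rw [h]; group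

theorem conj_eq_iff' (a x y : W) : a * x * a⁻¹ = y ↔ x = a⁻¹ * y * a := by
  constructor
  · intro h; rw [← h]; group
  · intro h; rw [h]; group

/-- The positionwise matching condition in the palindrome argument. -/
theorem pal_cond_iff (p d : W) (k i : B) :
    d⁻¹ * cs.simple k * d = cs.simple i ↔
      p * cs.simple k * p⁻¹
        = (p * cs.simple k * d) * cs.simple i * (p * cs.simple k * d)⁻¹ := by
  rw [conj_eq_iff d (cs.simple k) (cs.simple i), conj_eq_iff' p]
  have hR : p⁻¹ * ((p * cs.simple k * d) * cs.simple i * (p * cs.simple k * d)⁻¹) * p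
      = cs.simple k * ((d * cs.simple i * d⁻¹) * (cs.simple k)⁻¹) := by group
  rw [hR]
  constructor
  · intro h
    rw [← h]
    simp
  · intro h
    have h2 : cs.simple k * (1 : W) = cs.simple k * ((d * cs.simple i * d⁻¹) * (cs.simple k)⁻¹) := by
      rw [mul_one]; exact h
    have h3 := mul_left_cancel h2
    have h4 := (mul_inv_eq_one.mp h3.symm)
    exact h4.symm

/-- Key fact: the parity invariant of a reflection `t` at `t` itself is `1`. -/
theorem nuw_self_eq_one {t : W} (ht : cs.IsReflection t) : nuw cs t t = 1 := by
  obtain ⟨u, i, rfl⟩ := ht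
  obtain ⟨α, hα⟩ := cs.wordProd_surjective u
  have hρ : cs.wordProd (α ++ i :: α.reverse) = u * cs.simple i * u⁻¹ := by
    rw [cs.wordProd_append, cs.wordProd_cons, cs.wordProd_reverse, hα, mul_assoc]
  rw [nuw_eq_nu cs hρ, nu, ris_append, ris_cons, List.map_append, List.sum_append,
    List.map_cons, List.sum_cons]
  have hπc : cs.wordProd (i :: α.reverse) = cs.simple i * u⁻¹ := by
    rw [cs.wordProd_cons, cs.wordProd_reverse, hα]
  have hhead : (cs.wordProd α.reverse)⁻¹ * cs.simple i * cs.wordProd α.reverse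
      = u * cs.simple i * u⁻¹ := by
    rw [cs.wordProd_reverse, hα, inv_inv]
  rw [hπc, hhead, if_pos rfl]
  have hS1 : (((cs.rightInvSeq α).map
        (fun x => (cs.simple i * u⁻¹)⁻¹ * x * (cs.simple i * u⁻¹))).map
        (fun x => if x = u * cs.simple i * u⁻¹ then (1 : ZMod 2) else 0)).sum
      = ((cs.rightInvSeq α).map (fun x => if x = cs.simple i then (1 : ZMod 2) else 0)).sum := by
    rw [List.map_map]
    refine congrArg List.sum (List.map_congr_left ?_)
    intro x _
    simp only [Function.comp_apply]
    refine if_congr ?_ rfl rfl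
    rw [conj_eq_iff]
    have ha : (cs.simple i * u⁻¹) * (u * cs.simple i * u⁻¹) * (cs.simple i * u⁻¹)⁻¹
        = cs.simple i := by group
    rw [ha]
  rw [hS1]
  have hS2 : ((cs.rightInvSeq α.reverse).map
        (fun x => if x = u * cs.simple i * u⁻¹ then (1 : ZMod 2) else 0)).sum
      = ((cs.leftInvSeq α).map
        (fun x => if x = u * cs.simple i * u⁻¹ then (1 : ZMod 2) else 0)).sum := by
    rw [cs.rightInvSeq_reverse, List.map_reverse, List.sum_reverse]
  rw [hS2]
  have hmain : ((cs.rightInvSeq α).map (fun x => if x = cs.simple i then (1 : ZMod 2) else 0)).sum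
      = ((cs.leftInvSeq α).map
        (fun x => if x = u * cs.simple i * u⁻¹ then (1 : ZMod 2) else 0)).sum := by
    refine sum_ind_congr (by simp) ?_
    intro k hk
    have hk' : k < α.length := by simpa using hk
    have hget : α[k]? = some α[k] := by
      rw [List.getElem?_eq_getElem hk']
    rw [cs.getD_rightInvSeq, cs.getD_leftInvSeq, hget]
    simp only [Option.map_some, Option.getD_some]
    have hu : u = cs.wordProd (α.take k) * cs.simple α[k] * cs.wordProd (α.drop (k + 1)) := by
      rw [← hα]
      conv_lhs => rw [← List.take_append_drop k α]
      rw [cs.wordProd_append, ← List.getElem_cons_drop hk', cs.wordProd_cons, ← mul_assoc]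
    rw [hu]
    exact pal_cond_iff cs _ _ _ _
  rw [hmain]
  have hfin : ∀ x : ZMod 2, x + (1 + x) = 1 := by decide
  exact hfin _

theorem nuw_eq_one_of_inversion {w t : W} (ht : cs.IsReflection t)
    (h : cs.length (w * t) < cs.length w) : nuw cs w t = 1 := by
  have hkey : nuw cs w t = nuw cs (w * t) t + 1 := by
    have hw : w = (w * t) * t := by rw [mul_assoc, ht.mul_self, mul_one]
    have h1 : nuw cs w t = nuw cs (w * t) (t * t * t⁻¹) + nuw cs t t := by
      conv_lhs => rw [hw]
      exact nuw_mul cs (w * t) t t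
    rw [h1, ht.mul_self, one_mul, ht.inv, nuw_self_eq_one cs ht]
  have hne : nuw cs (w * t) t ≠ 1 := by
    intro h1
    obtain ⟨ω, hωred, hωprod⟩ := cs.exists_reduced_word' (w * t)
    have h2 : nu cs ω t = 1 := by rw [← nuw_eq_nu cs hωprod.symm t, h1]
    have h3 : t ∈ cs.rightInvSeq ω := by
      apply mem_of_sum_ind_ne_zero
      rw [← nu, h2]
      decide
    have h4 := cs.isRightInversion_of_mem_rightInvSeq hωred h3
    have h5 : cs.length (w * t * t) < cs.length (w * t) := by
      have h6 := h4.2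
      rw [← hωprod] at h6
      exact h6
    rw [mul_assoc, ht.mul_self, mul_one] at h5
    omega
  have h0 : nuw cs (w * t) t = 0 := by
    have : ∀ x : ZMod 2, x = 0 ∨ x = 1 := by decide
    rcases this (nuw cs (w * t) t) with h' | h'
    · exact h'
    · exact absurd h' hne
  rw [hkey, h0, zero_add]

/-- Strong exchange property. -/
theorem strong_exchange {t : W} (ω : List B) (ht : cs.IsReflection t)
    (h : cs.length (cs.wordProd ω * t) < cs.length (cs.wordProd ω)) :
    ∃ j, j < ω.length ∧ cs.wordProd (ω.eraseIdx j) = cs.wordProd ω * t := by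
  have h1 : nu cs ω t = 1 := by
    rw [← nuw_eq_nu cs rfl t]
    exact nuw_eq_one_of_inversion cs ht h
  have h2 : t ∈ cs.rightInvSeq ω := by
    apply mem_of_sum_ind_ne_zero
    rw [← nu, h1]
    decide
  obtain ⟨j, hj, hget⟩ := List.mem_iff_getElem.mp h2
  have hj' : j < ω.length := by simpa using hj
  refine ⟨j, hj', ?_⟩
  have hgetD : (cs.rightInvSeq ω).getD j 1 = t := by
    rw [List.getD_eq_getElem _ _ hj, hget]
  rw [← cs.wordProd_mul_getD_rightInvSeq ω j, hgetD]

/-- Every word has a reduced sublist with the same product. -/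
theorem exists_reduced_sublist (ω : List B) :
    ∃ ω', ω' <+ ω ∧ cs.IsReduced ω' ∧ cs.wordProd ω' = cs.wordProd ω := by
  have H : ∀ n (ω : List B), ω.length ≤ n →
      ∃ ω', ω' <+ ω ∧ cs.IsReduced ω' ∧ cs.wordProd ω' = cs.wordProd ω := by
    intro n
    induction n with
    | zero =>
      intro ω hω
      have : ω = [] := List.eq_nil_of_length_eq_zero (by omega)
      subst this
      exact ⟨[], List.Sublist.refl _, by simp [CoxeterSystem.IsReduced], rfl⟩
    | succ n ih =>
      intro ω hω
      by_cases hred : cs.IsReduced ω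
      · exact ⟨ω, List.Sublist.refl _, hred, rfl⟩
      · have hlt : cs.length (cs.wordProd ω) < ω.length :=
          lt_of_le_of_ne (cs.length_wordProd_le ω) hred
        have hdesc : ∃ k, k < ω.length ∧
            cs.length (cs.wordProd (ω.take (k + 1))) < cs.length (cs.wordProd (ω.take k)) := by
          by_contra hcon
          push_neg at hcon
          have hmono : ∀ k, k ≤ ω.length → k ≤ cs.length (cs.wordProd (ω.take k)) := by
            intro k
            induction k with
            | zero => intro; omega
            | succ k ihk =>
              intro hk
              have hk' : k < ω.length := by omega
              have h1 := ihk (by omega)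
              have h2 := hcon k hk'
              have h3 : ω.take (k + 1) = ω.take k ++ [ω[k]] := by
                rw [List.take_succ, List.getElem?_eq_getElem hk']
                rfl
              have h4 : cs.wordProd (ω.take (k + 1)) = cs.wordProd (ω.take k) * cs.simple ω[k] := by
                rw [h3, cs.wordProd_append, cs.wordProd_singleton]
              rcases cs.length_mul_simple (cs.wordProd (ω.take k)) ω[k] with h5 | h5 <;>
                rw [h4] at h2 ⊢ <;> omega
          have := hmono ω.length le_rfl
          rw [List.take_length] at this
          omega
        obtain ⟨k, hk, hkdesc⟩ := hdesc
        have h3 : ω.take (k + 1) = ω.take k ++ [ω[k]] := by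
          rw [List.take_succ, List.getElem?_eq_getElem hk]
          rfl
        have h4 : cs.wordProd (ω.take (k + 1)) = cs.wordProd (ω.take k) * cs.simple ω[k] := by
          rw [h3, cs.wordProd_append, cs.wordProd_singleton]
        rw [h4] at hkdesc
        obtain ⟨j, hj, hjprod⟩ := strong_exchange cs (ω.take k)
          (cs.isReflection_simple ω[k]) hkdesc
        set ω' := (ω.take k).eraseIdx j ++ ω.drop (k + 1) with hω'
        have hlenj : j < (ω.take k).length := hj
        have hsub : ω' <+ ω := by
          have h5 : (ω.take k).eraseIdx j <+ ω.take k := List.eraseIdx_sublist _ _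
          have h6 : ω.drop (k + 1) <+ ω.drop k := by
            have : ω.drop (k + 1) = List.drop 1 (ω.drop k) := by
              rw [List.drop_drop]
            rw [this]
            exact List.drop_sublist 1 _
          have h7 := List.Sublist.append h5 h6
          rwa [List.take_append_drop] at h7
        have hprod : cs.wordProd ω' = cs.wordProd ω := by
          rw [hω', cs.wordProd_append, hjprod]
          conv_rhs => rw [← List.take_append_drop (k + 1) ω]
          rw [cs.wordProd_append, h4]
        have hlen' : ω'.length ≤ n := by
          have h8 : ((ω.take k).eraseIdx j).length + 1 = (ω.take k).length :=
            List.length_eraseIdx_add_one hlenj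
          have h9 : (ω.take k).length = k := by rw [List.length_take, min_eq_left hk.le]
          have h10 : (ω.drop (k + 1)).length = ω.length - (k + 1) := by
            rw [List.length_drop]
          rw [h9] at h8
          rw [hω', List.length_append, h10]
          omega
        obtain ⟨ω'', hsub'', hred'', hprod''⟩ := ih ω' hlen'
        exact ⟨ω'', hsub''.trans hsub, hred'', by rw [hprod'', hprod]⟩
  exact H ω.length ω le_rfl

/-- One step of the Bruhat chain order: multiply by a reflection, increasing length. -/
def bstep (a b : W) : Prop :=
  (∃ t, cs.IsReflection t ∧ b = a * t) ∧ cs.length a < cs.length b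

/-- Bruhat order defined via chains of reflections. -/
def BLEc (x y : W) : Prop := Relation.ReflTransGen (bstep cs) x y

theorem BLEc.refl (x : W) : BLEc cs x x := Relation.ReflTransGen.refl

theorem ble_length {x y : W} (h : BLEc cs x y) : cs.length x ≤ cs.length y := by
  induction h with
  | refl => exact le_rfl
  | tail _ hstep ih => exact ih.trans hstep.2.le

theorem chain_sub {x y : W} (h : BLEc cs x y) :
    ∀ R : List B, cs.IsReduced R → cs.wordProd R = y →
      ∃ C, C <+ R ∧ cs.wordProd C = x := by
  induction h with
  | refl => exact fun R _ hR => ⟨R, List.Sublist.refl _, hR⟩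
  | tail hchain hstep ih =>
    rename_i y' y
    intro R hRred hRprod
    obtain ⟨⟨t, ht, hyt⟩, hlt⟩ := hstep
    have hy't : y * t = y' := by rw [hyt, mul_assoc, ht.mul_self, mul_one]
    have hlt' : cs.length (cs.wordProd R * t) < cs.length (cs.wordProd R) := by
      rw [hRprod, hy't]
      exact hlt
    obtain ⟨j, hj, hjprod⟩ := strong_exchange cs R ht hlt'
    have hjprod' : cs.wordProd (R.eraseIdx j) = y' := by rw [hjprod, hRprod, hy't]
    obtain ⟨E, hEsub, hEred, hEprod⟩ := exists_reduced_sublist cs (R.eraseIdx j)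
    obtain ⟨C, hCsub, hCprod⟩ := ih E hEred (by rw [hEprod, hjprod'])
    exact ⟨C, hCsub.trans (hEsub.trans (List.eraseIdx_sublist _ _)), hCprod⟩

theorem grand (n : ℕ) :
    (∀ x D (i : B), cs.length (D * cs.simple i) = n →
        cs.length D < cs.length (D * cs.simple i) → BLEc cs x D →
        BLEc cs (x * cs.simple i) (D * cs.simple i)) ∧
    (∀ x D (i : B), cs.length D = n →
        cs.length (D * cs.simple i) < cs.length D → BLEc cs x D →
        BLEc cs (x * cs.simple i) D) ∧
    (∀ R : List B, cs.IsReduced R → cs.length (cs.wordProd R) = n →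
        ∀ A, A <+ R → BLEc cs (cs.wordProd A) (cs.wordProd R)) := by
  induction n using Nat.strong_induction_on with
  | _ n IH =>
  have p2 : ∀ x D (i : B), cs.length (D * cs.simple i) = n →
      cs.length D < cs.length (D * cs.simple i) → BLEc cs x D →
      BLEc cs (x * cs.simple i) (D * cs.simple i) := by
    intro x D i hn hup hble
    rcases hble.cases_tail with heq | ⟨D', hchain, hstep⟩
    · rw [← heq]
      exact BLEc.refl cs _
    · obtain ⟨⟨t, ht, hDt⟩, hlt⟩ := hstep
      rcases cs.length_mul_simple D' i with hup' | hdn'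
      · -- length goes up at D'
        have hm : cs.length (D' * cs.simple i) < n := by omega
        have hble2 : BLEc cs (x * cs.simple i) (D' * cs.simple i) :=
          (IH _ hm).1 x D' i rfl (by omega) hchain
        refine hble2.tail ?_
        constructor
        · refine ⟨cs.simple i * t * cs.simple i, ?_, ?_⟩
          · have h := ht.conj (cs.simple i)
            rwa [cs.inv_simple] at h
          · rw [hDt]
            simp [mul_assoc, cs.simple_mul_simple_cancel_left]
        · omega
      · -- length goes down at D'
        have hm : cs.length D' < n := by omega
        have hble2 : BLEc cs (x * cs.simple i) D' :=
          (IH _ hm).2.1 x D' i rfl (by omega) hchain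
        exact (hble2.tail ⟨⟨t, ht, hDt⟩, hlt⟩).tail
          ⟨⟨cs.simple i, cs.isReflection_simple i, rfl⟩, hup⟩
  have p1 : ∀ x D (i : B), cs.length D = n →
      cs.length (D * cs.simple i) < cs.length D → BLEc cs x D →
      BLEc cs (x * cs.simple i) D := by
    intro x D i hn hdn hble
    have hdn' : cs.length (D * cs.simple i) + 1 = cs.length D := by
      rcases cs.length_mul_simple D i with h | h <;> omega
    rcases cs.length_mul_simple x i with hxup | hxdn
    · -- x * s i is longer than x
      obtain ⟨R₀, hR₀red, hR₀⟩ := cs.exists_reduced_word' (D * cs.simple i)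
      have hπR : cs.wordProd (R₀ ++ [i]) = D := by
        rw [cs.wordProd_append, cs.wordProd_singleton, ← hR₀,
          cs.simple_mul_simple_cancel_right]
      have hR₀len : R₀.length = cs.length (D * cs.simple i) := by
        rw [← hR₀red, ← hR₀]
      have hRred : cs.IsReduced (R₀ ++ [i]) := by
        show cs.length _ = _
        rw [hπR, List.length_append, List.length_singleton, hR₀len]
        omega
      obtain ⟨C, hCsub, hCprod⟩ := chain_sub cs hble (R₀ ++ [i]) hRred hπR
      rcases List.sublist_append_iff.mp hCsub with ⟨C₁, C₂, rfl, hC₁, hC₂⟩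
      have hmm1 : cs.length (cs.wordProd R₀) < n := by rw [← hR₀]; omega
      rcases List.sublist_singleton.mp hC₂ with rfl | rfl
      · -- C₂ = []
        rw [List.append_nil] at hCprod
        have hble2 : BLEc cs x (D * cs.simple i) := by
          have := (IH _ (by omega : cs.length (D * cs.simple i) < n)).2.2 R₀ hR₀red
            (by rw [← hR₀]) C₁ hC₁
          rwa [hCprod, ← hR₀] at this
        have := p2 x (D * cs.simple i) i
          (by rw [cs.simple_mul_simple_cancel_right]; omega)
          (by rw [cs.simple_mul_simple_cancel_right]; omega) hble2
        rwa [cs.simple_mul_simple_cancel_right] at this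
      · -- C₂ = [i]
        rw [cs.wordProd_append, cs.wordProd_singleton] at hCprod
        have hC₁prod : cs.wordProd C₁ = x * cs.simple i := by
          rw [← hCprod, cs.simple_mul_simple_cancel_right]
        have hble2 : BLEc cs (x * cs.simple i) (D * cs.simple i) := by
          have := (IH _ (by omega : cs.length (D * cs.simple i) < n)).2.2 R₀ hR₀red
            (by rw [← hR₀]) C₁ hC₁
          rwa [hC₁prod, ← hR₀] at this
        refine hble2.tail ?_
        exact ⟨⟨cs.simple i, cs.isReflection_simple i,
          (cs.simple_mul_simple_cancel_right i).symm⟩, by omega⟩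
    · -- x * s i is shorter than x
      have hstep : bstep cs (x * cs.simple i) x :=
        ⟨⟨cs.simple i, cs.isReflection_simple i,
          (cs.simple_mul_simple_cancel_right i).symm⟩, by omega⟩
      exact (Relation.ReflTransGen.single hstep).trans hble
  have p0 : ∀ R : List B, cs.IsReduced R → cs.length (cs.wordProd R) = n →
      ∀ A, A <+ R → BLEc cs (cs.wordProd A) (cs.wordProd R) := by
    intro R hRred hn A hA
    rcases List.eq_nil_or_concat R with rfl | ⟨R₀, j, rfl⟩
    · rw [List.sublist_nil.mp hA]
      exact BLEc.refl cs _
    · rw [List.concat_eq_append] at hA hRred hn ⊢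
      have hR₀red : cs.IsReduced R₀ := by
        have := hRred.take R₀.length
        rwa [List.take_left] at this
      have hlen : cs.length (cs.wordProd R₀) = n - 1 := by
        rw [hR₀red]
        have h1 : cs.length (cs.wordProd (R₀ ++ [j])) = R₀.length + 1 := by
          rw [hRred, List.length_append, List.length_singleton]
        omega
      have hn1 : 1 ≤ n := by
        have h1 : cs.length (cs.wordProd (R₀ ++ [j])) = R₀.length + 1 := by
          rw [hRred, List.length_append, List.length_singleton]
        omega
      have hup : cs.length (cs.wordProd R₀) < cs.length (cs.wordProd R₀ * cs.simple j) := by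
        have h1 : cs.length (cs.wordProd (R₀ ++ [j])) = R₀.length + 1 := by
          rw [hRred, List.length_append, List.length_singleton]
        have h2 : cs.wordProd (R₀ ++ [j]) = cs.wordProd R₀ * cs.simple j := by
          rw [cs.wordProd_append, cs.wordProd_singleton]
        have h3 : cs.length (cs.wordProd R₀) = R₀.length := hR₀red
        rw [← h2, h1, h3]
        omega
      rcases List.sublist_append_iff.mp hA with ⟨A₁, A₂, rfl, hA₁, hA₂⟩
      have hbase : BLEc cs (cs.wordProd A₁) (cs.wordProd R₀) :=
        (IH (n - 1) (by omega)).2.2 R₀ hR₀red hlen A₁ hA₁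
      have hπR : cs.wordProd (R₀ ++ [j]) = cs.wordProd R₀ * cs.simple j := by
        rw [cs.wordProd_append, cs.wordProd_singleton]
      rcases List.sublist_singleton.mp hA₂ with rfl | rfl
      · rw [List.append_nil, hπR]
        refine hbase.tail ?_
        exact ⟨⟨cs.simple j, cs.isReflection_simple j, rfl⟩, hup⟩
      · rw [cs.wordProd_append, cs.wordProd_singleton, hπR]
        exact p2 (cs.wordProd A₁) (cs.wordProd R₀) j (by rw [← hπR, hn]) hup hbase
  exact ⟨p2, p1, p0⟩

theorem dem_concat (ω : List B) (i : B) :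
    Dem cs (ω ++ [i]) =
      (if cs.length (Dem cs ω) < cs.length (Dem cs ω * cs.simple i)
        then Dem cs ω * cs.simple i else Dem cs ω) := by
  show List.foldl _ 1 (ω ++ [i]) = _
  rw [List.foldl_append]
  rfl

/-- The product of any sublist of `ω` is below the Demazure product of `ω` in Bruhat order. -/
theorem dem_ble (ω : List B) : ∀ A, A <+ ω → BLEc cs (cs.wordProd A) (Dem cs ω) := by
  induction ω using List.reverseRecOn with
  | nil =>
    intro A hA
    rw [List.sublist_nil.mp hA]
    exact BLEc.refl cs _
  | append_singleton ω i ih =>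
    intro A hA
    rcases List.sublist_append_iff.mp hA with ⟨A₁, A₂, rfl, h1, h2⟩
    have hD := ih A₁ h1
    rw [dem_concat]
    by_cases hup : cs.length (Dem cs ω) < cs.length (Dem cs ω * cs.simple i)
    · rw [if_pos hup]
      rcases List.sublist_singleton.mp h2 with rfl | rfl
      · rw [List.append_nil]
        exact hD.tail ⟨⟨cs.simple i, cs.isReflection_simple i, rfl⟩, hup⟩
      · rw [cs.wordProd_append, cs.wordProd_singleton]
        exact (grand cs (cs.length (Dem cs ω * cs.simple i))).1 _ _ i rfl hup hD
    · rw [if_neg hup]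
      have hdn : cs.length (Dem cs ω * cs.simple i) < cs.length (Dem cs ω) := by
        rcases cs.length_mul_simple (Dem cs ω) i with h | h <;> omega
      rcases List.sublist_singleton.mp h2 with rfl | rfl
      · rw [List.append_nil]
        exact hD
      · rw [cs.wordProd_append, cs.wordProd_singleton]
        exact (grand cs (cs.length (Dem cs ω))).2.1 _ _ i rfl hdn hD

theorem dem_length_le {ω A : List B} (hA : A <+ ω) :
    cs.length (cs.wordProd A) ≤ cs.length (Dem cs ω) :=
  ble_length cs (dem_ble cs ω A hA)

theorem ncard_mem_list {L : List W} (hL : L.Nodup) : {t | t ∈ L}.ncard = L.length := by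
  have h1 : {t | t ∈ L} = ↑L.toFinset := by
    ext t
    simp
  rw [h1, Set.ncard_coe_finset, List.toFinset_card_of_nodup hL]

/-- The master length formula for a maximal-length element. -/
theorem mll (w0 : W) (hw0 : ∀ w : W, cs.length w ≤ cs.length w0) (u : W) :
    cs.length u + cs.length (u⁻¹ * w0) = cs.length w0 := by
  obtain ⟨a, hared, ha⟩ := cs.exists_reduced_word' u
  obtain ⟨b, hbred, hb⟩ := cs.exists_reduced_word' (u⁻¹ * w0)
  have hc : cs.wordProd (a ++ b) = w0 := by
    rw [cs.wordProd_append, ← ha, ← hb, mul_inv_cancel_left]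
  have hinv_w0 : ∀ t : W, cs.IsReflection t → cs.length (w0 * t) < cs.length w0 :=
    fun t ht => lt_of_le_of_ne (hw0 _) (ht.length_mul_left_ne w0)
  have hnu1 : ∀ t : W, cs.IsReflection t → nuw cs w0 t = 1 :=
    fun t ht => nuw_eq_one_of_inversion cs ht (hinv_w0 t ht)
  -- every reflection appears in the inversion sequence of a ++ b
  have hmem : ∀ t : W, cs.IsReflection t → t ∈ cs.rightInvSeq (a ++ b) := by
    intro t ht
    apply mem_of_sum_ind_ne_zero
    rw [← nu, ← nuw_eq_nu cs hc t, hnu1 t ht]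
    decide
  -- the two halves of the inversion sequence
  have hsplit := ris_append cs a b
  have hnodupa : (cs.rightInvSeq a).Nodup := hared.nodup_rightInvSeq
  have hnodupb : (cs.rightInvSeq b).Nodup := hbred.nodup_rightInvSeq
  have hinj : Function.Injective
      (fun x : W => (cs.wordProd b)⁻¹ * x * cs.wordProd b) := by
    intro x y h
    simp only [] at h
    have := mul_right_cancel h
    exact mul_left_cancel this
  have hnodupm : ((cs.rightInvSeq a).map
      (fun x => (cs.wordProd b)⁻¹ * x * cs.wordProd b)).Nodup :=
    hnodupa.map hinj
  have hdisj : ∀ t : W,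
      t ∈ (cs.rightInvSeq a).map (fun x => (cs.wordProd b)⁻¹ * x * cs.wordProd b) →
      t ∈ cs.rightInvSeq b → False := by
    intro t htm htb
    have htrefl : cs.IsReflection t := cs.isReflection_of_mem_rightInvSeq b htb
    have h1 : nu cs (a ++ b) t = 1 := by
      rw [← nuw_eq_nu cs hc t]
      exact hnu1 t htrefl
    rw [nu, hsplit, List.map_append, List.sum_append,
      sum_ind_of_nodup hnodupm htm, sum_ind_of_nodup hnodupb htb] at h1
    exact absurd h1 (by decide)
  have hnodupc : (cs.rightInvSeq (a ++ b)).Nodup := by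
    rw [hsplit]
    exact List.Nodup.append hnodupm hnodupb hdisj
  -- reflections = elements of ris (a ++ b)
  have hTc : {t : W | cs.IsReflection t} = {t | t ∈ cs.rightInvSeq (a ++ b)} := by
    ext t
    exact ⟨fun ht => hmem t ht, fun ht => cs.isReflection_of_mem_rightInvSeq _ ht⟩
  -- reflections = elements of ris R for a reduced word R of w0
  obtain ⟨R, hRred, hR⟩ := cs.exists_reduced_word' w0
  have hTR : {t : W | cs.IsReflection t} = {t | t ∈ cs.rightInvSeq R} := by
    ext t
    constructor
    · intro ht
      apply mem_of_sum_ind_ne_zero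
      rw [← nu, ← nuw_eq_nu cs hR.symm t, hnu1 t ht]
      decide
    · exact fun ht => cs.isReflection_of_mem_rightInvSeq _ ht
  have hcard1 : {t : W | cs.IsReflection t}.ncard = a.length + b.length := by
    rw [hTc, ncard_mem_list hnodupc]
    rw [cs.length_rightInvSeq, List.length_append]
  have hcard2 : {t : W | cs.IsReflection t}.ncard = cs.length w0 := by
    rw [hTR, ncard_mem_list hRred.nodup_rightInvSeq, cs.length_rightInvSeq]
    rw [← hRred, ← hR]
  have hla : a.length = cs.length u := by rw [← hared, ← ha]
  have hlb : b.length = cs.length (u⁻¹ * w0) := by rw [← hbred, ← hb]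
  omega

/-- `subwordDel` with a general starting index. -/
def sdA {α : Type*} (n : ℕ) (P : List α) (I : Finset ℕ) : List α :=
  ((P.zipIdx n).filter (fun p => p.2 ∉ I)).map Prod.fst

theorem subwordDel_eq_sdA {α : Type*} (Q : List α) (I : Finset ℕ) :
    subwordDel Q I = sdA 1 Q I := rfl

theorem sdA_sublist {α : Type*} (n : ℕ) (P : List α) (I : Finset ℕ) : sdA n P I <+ P := by
  have h1 : (P.zipIdx n).filter (fun p => p.2 ∉ I) <+ P.zipIdx n := List.filter_sublist
  have h2 := h1.map Prod.fst
  rwa [List.zipIdx_map_fst] at h2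

theorem subwordDel_sublist {α : Type*} (Q : List α) (I : Finset ℕ) : subwordDel Q I <+ Q :=
  sdA_sublist 1 Q I

theorem subwordDel_append {α : Type*} (Q P : List α) (I : Finset ℕ) :
    subwordDel (Q ++ P) I = subwordDel Q I ++ sdA (1 + Q.length) P I := by
  show sdA 1 (Q ++ P) I = _
  simp only [sdA]
  rw [List.zipIdx_append, List.filter_append, List.map_append]
  rfl

theorem fst_ge_of_mem_enumFrom {α : Type*} {x : α × ℕ} {n : ℕ} {l : List α}
    (h : x ∈ List.zipIdx l n) : n ≤ x.2 := by
  obtain ⟨i, hi, hx⟩ := List.mem_iff_getElem.mp h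
  rw [List.getElem_zipIdx] at hx
  subst hx
  simp

theorem sdA_eq_self {α : Type*} {n : ℕ} {P : List α} {I : Finset ℕ}
    (h : ∀ k ∈ I, k < n) : sdA n P I = P := by
  simp only [sdA]
  have h1 : (P.zipIdx n).filter (fun p => p.2 ∉ I) = P.zipIdx n := by
    apply List.filter_eq_self.mpr
    intro a ha
    simp only [decide_eq_true_eq]
    intro haI
    exact absurd (fst_ge_of_mem_enumFrom ha) (by have := h a.2 haI; omega)
  rw [h1, List.zipIdx_map_fst]

theorem sdA_length_lt {α : Type*} {n k : ℕ} {P : List α} {I : Finset ℕ}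
    (hk : k ∈ I) (h1 : n ≤ k) (h2 : k < n + P.length) :
    (sdA n P I).length < P.length := by
  simp only [sdA]
  rw [List.length_map]
  refine lt_of_le_of_ne ?_ ?_
  · have := List.length_filter_le (fun p : α × ℕ => decide (p.2 ∉ I)) (P.zipIdx n)
    rwa [List.length_zipIdx] at this
  · intro heq
    have heq' : (List.filter (fun p : α × ℕ => decide (p.2 ∉ I)) (P.zipIdx n)).length
        = (P.zipIdx n).length := by rwa [List.length_zipIdx]
    have hall := List.length_filter_eq_length_iff.mp heq'
    have hmem : ((P[k - n]'(by omega), k) : α × ℕ) ∈ P.zipIdx n := by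
      apply List.mem_iff_getElem.mpr
      refine ⟨k - n, by rw [List.length_zipIdx]; omega, ?_⟩
      rw [List.getElem_zipIdx]
      have : n + (k - n) = k := by omega
      rw [this]
    have := hall _ hmem
    simp only [decide_eq_true_eq] at this
    exact this hk

end SWAux

/-- for a finite Coxeter system with longest element `w₀`, a spherical
subword complex `SC(Q, π)` (i.e. `Dem(Q) = π`), and `Q' = Q ++ P` where `P` is a reduced
word for `π⁻¹w₀`, the facets of `SC(Q', w₀)` coincide with the facets of `SC(Q, π)`;
in particular the two complexes are equal (hence isomorphic). -/
theorem stmt_5 {B W : Type*} [Group W] [Finite W] {M : CoxeterMatrix B}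
    (cs : CoxeterSystem M W) (w0 : W) (hw0 : ∀ w : W, cs.length w ≤ cs.length w0)
    (Q P : List B) (π : W) (hsph : Dem cs Q = π)
    (hP : cs.IsReduced P) (hPprod : cs.wordProd P = π⁻¹ * w0) :
    (∀ I : Finset ℕ, IsSCFacet cs Q π I ↔ IsSCFacet cs (Q ++ P) w0 I) ∧
    subwordCpx cs Q π = subwordCpx cs (Q ++ P) w0 := by
  classical
  have hmll := SWAux.mll cs w0 hw0 π
  have hPlen : P.length = cs.length (π⁻¹ * w0) := by
    rw [← hPprod]
    exact hP.symm
  have main : ∀ I : Finset ℕ, IsSCFacet cs Q π I ↔ IsSCFacet cs (Q ++ P) w0 I := by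
    intro I
    constructor
    · rintro ⟨hI, hred, hprod⟩
      have hIbound : ∀ k ∈ I, k < 1 + Q.length := by
        intro k hk
        have := hI hk
        rw [Finset.mem_Icc] at this
        omega
      have hQP : subwordDel (Q ++ P) I = subwordDel Q I ++ P := by
        rw [SWAux.subwordDel_append, SWAux.sdA_eq_self hIbound]
      have hprod' : cs.wordProd (subwordDel (Q ++ P) I) = w0 := by
        rw [hQP, cs.wordProd_append, hprod, hPprod, mul_inv_cancel_left]
      have h1 : (subwordDel Q I).length = cs.length π := by
        rw [← hred, hprod]
      refine ⟨?_, ?_, hprod'⟩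
      · intro k hk
        have := hI hk
        rw [Finset.mem_Icc] at this ⊢
        rw [List.length_append]
        omega
      · show cs.length _ = _
        rw [hprod', hQP, List.length_append]
        omega
    · rintro ⟨hI, hred, hprod⟩
      have hsplit : subwordDel (Q ++ P) I = subwordDel Q I ++ SWAux.sdA (1 + Q.length) P I :=
        SWAux.subwordDel_append Q P I
      set A := subwordDel Q I with hAdef
      set Pb := SWAux.sdA (1 + Q.length) P I with hPbdef
      have hredlen : cs.length w0 = A.length + Pb.length := by
        rw [← hprod, hred, hsplit, List.length_append]
      have hprodsplit : cs.wordProd A * cs.wordProd Pb = w0 := by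
        rw [← cs.wordProd_append, ← hsplit, hprod]
      have hAsub : List.Sublist A Q := SWAux.subwordDel_sublist Q I
      have hPbsub : List.Sublist Pb P := SWAux.sdA_sublist _ P I
      have hlPb : cs.length (cs.wordProd Pb) ≤ Pb.length := cs.length_wordProd_le Pb
      have hlA_le : cs.length (cs.wordProd A) ≤ A.length := cs.length_wordProd_le A
      have htri : cs.length w0 ≤ cs.length (cs.wordProd A) + cs.length (cs.wordProd Pb) := by
        rw [← hprodsplit]
        exact cs.length_mul_le _ _
      have hlA : cs.length (cs.wordProd A) = A.length := by omega
      have hdem : cs.length (cs.wordProd A) ≤ cs.length π := by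
        have := SWAux.dem_length_le cs hAsub
        rwa [hsph] at this
      have hPblen : Pb.length = P.length := by
        have hle := hPbsub.length_le
        omega
      have hPbP : Pb = P := hPbsub.eq_of_length hPblen
      have hIQ : ∀ k ∈ I, k ≤ Q.length := by
        intro k hk
        by_contra hgt
        push_neg at hgt
        have hk2 := hI hk
        rw [Finset.mem_Icc, List.length_append] at hk2
        have hlt := SWAux.sdA_length_lt (n := 1 + Q.length) (P := P) (I := I) hk
          (by omega) (by omega)
        rw [← hPbdef, hPblen] at hlt
        omega
      have hprodA : cs.wordProd A = π := by
        have h1 : cs.wordProd A * (π⁻¹ * w0) = w0 := by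
          rw [← hPprod, ← hPbP]
          exact hprodsplit
        have h2 := congrArg (fun z => z * (π⁻¹ * w0)⁻¹) h1
        simp only [mul_inv_cancel_right] at h2
        rw [h2]
        group
      refine ⟨?_, hlA, hprodA⟩
      intro k hk
      rw [Finset.mem_Icc]
      have h1 := hI hk
      rw [Finset.mem_Icc] at h1
      exact ⟨h1.1, hIQ k hk⟩
  refine ⟨main, ?_⟩
  ext J
  simp only [subwordCpx, Set.mem_setOf_eq]
  constructor
  · rintro ⟨I, hI, hJ⟩
    exact ⟨I, (main I).mp hI, hJ⟩
  · rintro ⟨I, hI, hJ⟩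
    exact ⟨I, (main I).mpr hI, hJ⟩
end

section
/- Let SC(Q, π) be a subword complex with Q = (q₁, q₂, …, q_r), let Q' = (q₂, …, q_r), and suppose {1} is a vertex of SC(Q, π). Then the deletion of vertex 1 from SC(Q, π) is isomorphic to SC(Q', π) if ℓ(q₁π) > ℓ(π), and isomorphic to SC(Q', q₁π) if ℓ(q₁π) < ℓ(π). -/
namespace SCAux

open CoxeterSystem List
open scoped Classical

variable {B W : Type*} [Group W] {M : CoxeterMatrix B} (cs : CoxeterSystem M W)

local prefix:100 "s" => cs.simple
local prefix:100 "π" => cs.wordProd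
local prefix:100 "ℓ" => cs.length

theorem conj_eq_iff (a t c : W) : a * t * a⁻¹ = c ↔ t = a⁻¹ * c * a := by
  constructor
  · rintro rfl; group
  · rintro rfl; group


theorem conj_pow_step (p t : W) (n : ℕ) :
    p ^ n * (p * t * p⁻¹) * (p ^ n)⁻¹ = p ^ (n+1) * t * (p ^ (n+1))⁻¹ := by
  rw [pow_succ', mul_inv_rev]; group

theorem conj_simple_eq_iff (a : W) (ha : a * a = 1) (t c : W) : a * t * a = c ↔ t = a * c * a := by
  constructor
  · rintro rfl
    calc t = (a * a) * t * (a * a) := by rw [ha]; group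
    _ = a * (a * t * a) * a := by group
  · rintro rfl
    calc a * (a * c * a) * a = (a * a) * c * (a * a) := by group
    _ = c := by rw [ha]; group

/-- The underlying function of the permutation of `W × ZMod 2` associated to a simple
reflection. -/
noncomputable def sigmaFun (i : B) : W × ZMod 2 → W × ZMod 2 :=
  fun x => (s i * x.1 * s i, x.2 + if x.1 = s i then 1 else 0)

theorem sigmaFun_involutive (i : B) : Function.Involutive (sigmaFun cs i) := by
  intro ⟨t, ε⟩
  simp only [sigmaFun]
  rw [Prod.mk.injEq]
  constructor
  · simp [mul_assoc, cs.simple_mul_simple_self, cs.simple_mul_simple_cancel_left]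
  · have h1 : (s i * t * s i = s i) ↔ (t = s i) := by
      rw [conj_simple_eq_iff _ (cs.simple_mul_simple_self i)]
      have : s i * s i * s i = s i := by rw [cs.simple_mul_simple_self]; simp
      rw [this]
    simp only [h1]
    have h2 : (1 : ZMod 2) + 1 = 0 := by decide
    rcases eq_or_ne t (s i) with h | h
    · simp [h, add_assoc, h2]
    · simp [h]

/-- The permutation of `W × ZMod 2` associated to a simple reflection. -/
noncomputable def sigma (i : B) : Equiv.Perm (W × ZMod 2) := (sigmaFun_involutive cs i).toPerm

theorem sigma_apply (i : B) (t : W) (ε : ZMod 2) :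
    sigma cs i (t, ε) = (s i * t * s i, ε + if t = s i then 1 else 0) := rfl

theorem sigma_pow_apply (i j : B) (n : ℕ) : ∀ (t : W) (ε : ZMod 2),
    ((sigma cs i * sigma cs j) ^ n) (t, ε) =
      ((s i * s j) ^ n * t * ((s i * s j) ^ n)⁻¹,
        ε + ∑ k ∈ Finset.range n,
          ((if (s i * s j) ^ k * t * ((s i * s j) ^ k)⁻¹ = s j then 1 else 0) +
           (if (s i * s j) ^ k * t * ((s i * s j) ^ k)⁻¹ = s j * s i * s j then (1:ZMod 2) else 0))) := by
  induction n with
  | zero => intro t ε; simp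
  | succ n ih =>
    intro t ε
    rw [pow_succ, Equiv.Perm.mul_apply]
    have step : (sigma cs i * sigma cs j) (t, ε) =
        ((s i * s j) * t * ((s i * s j))⁻¹,
          ε + ((if t = s j then 1 else 0) + (if t = s j * s i * s j then (1:ZMod 2) else 0))) := by
      rw [Equiv.Perm.mul_apply, sigma_apply, sigma_apply]
      rw [Prod.mk.injEq]
      constructor
      · simp [mul_assoc, cs.inv_simple, mul_inv_rev]
      · have h3 : (s j * t * s j = s i) ↔ (t = s j * s i * s j) :=
          conj_simple_eq_iff _ (cs.simple_mul_simple_self j) t (s i)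
        simp only [h3]
        ring
    rw [step, ih _ _]
    rw [Prod.mk.injEq]
    constructor
    · exact conj_pow_step (s i * s j) t n
    · rw [Finset.sum_range_succ' (fun k =>
        ((if (s i * s j) ^ k * t * ((s i * s j) ^ k)⁻¹ = s j then 1 else 0) +
         (if (s i * s j) ^ k * t * ((s i * s j) ^ k)⁻¹ = s j * s i * s j then (1:ZMod 2) else 0))) n]
      simp only [pow_zero, one_mul, inv_one, mul_one]
      have hcong : ∀ k, (s i * s j) ^ k * ((s i * s j) * t * (s i * s j)⁻¹) * ((s i * s j) ^ k)⁻¹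
          = (s i * s j) ^ (k+1) * t * ((s i * s j) ^ (k+1))⁻¹ := by
        intro k; exact conj_pow_step (s i * s j) t k
      simp only [hcong]
      ring

theorem sigma_liftable : M.IsLiftable (fun i => (sigma cs i : Equiv.Perm (W × ZMod 2))) := by
  intro i j
  set m := M i j with hm
  apply Equiv.ext
  rintro ⟨t, ε⟩
  show ((sigma cs i * sigma cs j) ^ m) (t, ε) = _
  rw [sigma_pow_apply cs i j m t ε, Equiv.Perm.one_apply]
  have hpm : (s i * s j) ^ m = 1 := cs.simple_mul_simple_pow i j
  rw [Prod.mk.injEq]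
  constructor
  · simp [hpm]
  · have key : ∀ k, ((if (s i * s j) ^ k * t * ((s i * s j) ^ k)⁻¹ = s j then 1 else 0) +
         (if (s i * s j) ^ k * t * ((s i * s j) ^ k)⁻¹ = s j * s i * s j then (1:ZMod 2) else 0))
        = ((if t = s j * (s i * s j) ^ (2*k) then 1 else 0) +
           (if t = s j * (s i * s j) ^ (2*k+1) then (1:ZMod 2) else 0)) := by
      intro k
      set p := s i * s j with hp
      have h1 : s j * p * s j = p⁻¹ := by
        rw [hp]; simp [mul_assoc, cs.simple_mul_simple_cancel_left, mul_inv_rev,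
          cs.inv_simple]
      have hconj : s j * p ^ k * s j = (p ^ k)⁻¹ := by
        calc s j * p ^ k * s j = (s j * p * s j) ^ k := by
              induction k with
              | zero => simp [cs.simple_mul_simple_self]
              | succ k ihk =>
                rw [pow_succ, pow_succ, ← ihk]
                simp [mul_assoc, cs.simple_mul_simple_cancel_left]
        _ = (p ^ k)⁻¹ := by rw [h1, inv_pow]
      have hswap : (p ^ k)⁻¹ * s j = s j * p ^ k := by
        rw [← hconj]; simp [mul_assoc, cs.simple_mul_simple_cancel_right]
      have hcomm : p * p ^ k = p ^ k * p := by
        rw [← pow_succ', pow_succ]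
      have e1 : (p ^ k)⁻¹ * s j * p ^ k = s j * p ^ (2*k) := by
        rw [hswap, mul_assoc, ← pow_add, two_mul]
      have e2 : (p ^ k)⁻¹ * (s j * s i * s j) * p ^ k = s j * p ^ (2*k+1) := by
        have hsjsisj : s j * s i * s j = s j * p := by
          rw [hp, ← mul_assoc]
        have hexp : k + (k + 1) = 2*k+1 := by omega
        calc (p ^ k)⁻¹ * (s j * s i * s j) * p ^ k
            = ((p ^ k)⁻¹ * s j) * (p * p ^ k) := by rw [hsjsisj]; group
          _ = (s j * p ^ k) * (p ^ k * p) := by rw [hswap, hcomm]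
          _ = s j * (p ^ k * p ^ (k + 1)) := by rw [mul_assoc, ← pow_succ]
          _ = s j * p ^ (2*k+1) := by rw [← pow_add, hexp]
      have c1 : (p ^ k * t * (p ^ k)⁻¹ = s j) ↔ (t = s j * p ^ (2*k)) := by
        rw [conj_eq_iff, e1]
      have c2 : (p ^ k * t * (p ^ k)⁻¹ = s j * s i * s j) ↔ (t = s j * p ^ (2*k+1)) := by
        rw [conj_eq_iff, e2]
      simp only [c1, c2]
    simp only [key]
    have sum2 : ∀ (f : ℕ → ZMod 2) (n : ℕ),
        ∑ k ∈ Finset.range n, (f (2*k) + f (2*k+1)) = ∑ l ∈ Finset.range (2*n), f l := by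
      intro f n
      induction n with
      | zero => simp
      | succ n ihn =>
        rw [Finset.sum_range_succ, ihn, mul_add, mul_one, Finset.sum_range_succ,
          Finset.sum_range_succ]
        ring_nf
    rw [sum2 (fun l => if t = s j * (s i * s j) ^ l then 1 else 0) m]
    rw [two_mul, Finset.sum_range_add]
    have hper : ∀ l, (if t = s j * (s i * s j) ^ (m + l) then (1:ZMod 2) else 0)
        = (if t = s j * (s i * s j) ^ l then 1 else 0) := by
      intro l
      congr 1
      rw [pow_add, hpm, one_mul]
    simp only [hper]
    have h2 : ∀ a : ZMod 2, a + a = 0 := by decide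
    rw [h2]
    ring

/-- The lifted homomorphism `W →* Perm (W × ZMod 2)`. -/
noncomputable def phi : W →* Equiv.Perm (W × ZMod 2) :=
  CoxeterSystem.lift cs ⟨fun i => sigma cs i, sigma_liftable cs⟩

theorem phi_simple (i : B) : phi cs (s i) = sigma cs i :=
  CoxeterSystem.lift_apply_simple cs (sigma_liftable cs) i

/-- The parity cocycle. -/
noncomputable def eta (w : W) (t : W) : ZMod 2 := ((phi cs w) (t, 0)).2

theorem phi_fst (w : W) : ∀ t ε, ((phi cs w) (t, ε)).1 = w * t * w⁻¹ := by
  induction w using cs.simple_induction_left with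
  | one => intro t ε; simp
  | mul_simple_left w i ih =>
    intro t ε
    rw [map_mul, Equiv.Perm.mul_apply, phi_simple]
    have h1 : ((phi cs w) (t, ε)) = (w * t * w⁻¹, ((phi cs w) (t, ε)).2) := by
      rw [Prod.ext_iff]
      exact ⟨ih t ε, rfl⟩
    rw [h1, sigma_apply]
    simp [mul_assoc, mul_inv_rev, cs.inv_simple]

theorem phi_apply (w : W) (t : W) (ε : ZMod 2) :
    (phi cs w) (t, ε) = (w * t * w⁻¹, ε + eta cs w t) := by
  have hsnd : ∀ w : W, ∀ t ε, ((phi cs w) (t, ε)).2 = ε + ((phi cs w) (t, 0)).2 := by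
    intro w
    induction w using cs.simple_induction_left with
    | one => intro t ε; simp
    | mul_simple_left w i ih =>
      intro t ε
      rw [map_mul, Equiv.Perm.mul_apply, Equiv.Perm.mul_apply, phi_simple]
      have h1 : ((phi cs w) (t, ε)) = (w * t * w⁻¹, ((phi cs w) (t, ε)).2) := by
        rw [Prod.ext_iff]; exact ⟨phi_fst cs w t ε, rfl⟩
      have h2 : ((phi cs w) (t, 0)) = (w * t * w⁻¹, ((phi cs w) (t, 0)).2) := by
        rw [Prod.ext_iff]; exact ⟨phi_fst cs w t 0, rfl⟩
      rw [h1, h2, sigma_apply, sigma_apply]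
      simp only
      rw [ih t ε]
      ring
  rw [Prod.ext_iff]
  refine ⟨phi_fst cs w t ε, ?_⟩
  simp only [eta]
  exact hsnd w t ε

theorem eta_mul (u v : W) (t : W) : eta cs (u * v) t = eta cs v t + eta cs u (v * t * v⁻¹) := by
  have h : (phi cs (u * v)) (t, 0) = (phi cs u) ((phi cs v) (t, 0)) := by
    rw [map_mul, Equiv.Perm.mul_apply]
  rw [eta, h, phi_apply, phi_apply]
  simp [eta]

theorem eta_one (t : W) : eta cs 1 t = 0 := by simp [eta]

theorem eta_simple (i : B) (t : W) : eta cs (s i) t = if t = s i then 1 else 0 := by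
  rw [eta, phi_simple, sigma_apply]; simp

theorem eta_inv (w t : W) : eta cs w⁻¹ t = eta cs w (w⁻¹ * t * w) := by
  have h := eta_mul cs w⁻¹ w (w⁻¹ * t * w)
  rw [inv_mul_cancel, eta_one] at h
  have h2 : w * (w⁻¹ * t * w) * w⁻¹ = t := by group
  rw [h2] at h
  have key : ∀ a b : ZMod 2, 0 = a + b → b = a := by decide
  exact key _ _ h

theorem mem_rightInvSeq_of_eta_eq_one (ω : List B) (t : W)
    (h : eta cs (π ω) t = 1) : t ∈ cs.rightInvSeq ω := by
  induction ω with
  | nil =>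
    rw [wordProd_nil, eta_one] at h
    exact absurd h (by decide)
  | cons i ω ih =>
    rw [wordProd_cons, eta_mul, eta_simple] at h
    have hhead : cs.rightInvSeq (i :: ω) = ((π ω)⁻¹ * s i * π ω) :: cs.rightInvSeq ω := rfl
    rcases eq_or_ne (π ω * t * (π ω)⁻¹) (s i) with he | he
    · have : t = (π ω)⁻¹ * s i * π ω := by
        rw [← he]; group
      rw [hhead, this]
      exact List.mem_cons_self
    · rw [if_neg he, add_zero] at h
      rw [hhead]
      exact List.mem_cons_of_mem _ (ih h)

theorem length_mul_lt_of_eta_eq_one (w t : W) (h : eta cs w t = 1) :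
    ℓ (w * t) < ℓ w := by
  obtain ⟨ω, hωred, hω⟩ := cs.exists_reduced_word' w
  subst hω
  have ht : t ∈ cs.rightInvSeq ω := mem_rightInvSeq_of_eta_eq_one cs ω t h
  obtain ⟨j, hj, hjt⟩ := List.getElem_of_mem ht
  have hjlen : j < ω.length := by
    rwa [cs.length_rightInvSeq] at hj
  have hgetD : (cs.rightInvSeq ω).getD j 1 = t := by
    rw [List.getD_eq_getElem _ _ hj, hjt]
  have hkey := cs.wordProd_mul_getD_rightInvSeq ω j
  rw [hgetD] at hkey
  rw [hkey]
  calc ℓ (π (ω.eraseIdx j)) ≤ (ω.eraseIdx j).length := cs.length_wordProd_le _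
    _ < ω.length := by
        rw [← List.length_eraseIdx_add_one hjlen]
        omega
    _ = ℓ (π ω) := hωred.symm

theorem eta_self_eq_one {t : W} (ht : cs.IsReflection t) : eta cs t t = 1 := by
  obtain ⟨v, i, rfl⟩ := ht
  have h1 : eta cs (v * s i * v⁻¹) (v * s i * v⁻¹)
      = eta cs v⁻¹ (v * s i * v⁻¹) + eta cs (v * s i) (v⁻¹ * (v * s i * v⁻¹) * v⁻¹⁻¹) := by
    rw [eta_mul]
  have h2 : v⁻¹ * (v * s i * v⁻¹) * v⁻¹⁻¹ = s i := by group
  have h3 : eta cs (v * s i) (s i) = eta cs (s i) (s i) + eta cs v (s i * s i * (s i)⁻¹) := by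
    rw [eta_mul]
  have h4 : s i * s i * (s i)⁻¹ = s i := by group
  have h5 : eta cs v⁻¹ (v * s i * v⁻¹) = eta cs v (s i) := by
    rw [eta_inv]
    congr 1
    group
  rw [h1, h2, h3, h4, h5, eta_simple, if_pos rfl]
  have : ∀ a : ZMod 2, a + (1 + a) = 1 := by decide
  exact this _

theorem eta_eq_one_of_length_mul_lt {w t : W} (ht : cs.IsReflection t)
    (h : ℓ (w * t) < ℓ w) : eta cs w t = 1 := by
  by_contra hne
  have h0 : eta cs w t = 0 := by
    have : ∀ a : ZMod 2, a ≠ 1 → a = 0 := by decide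
    exact this _ hne
  have h1 : eta cs (w * t) t = 1 := by
    rw [eta_mul]
    have h2 : t * t * t⁻¹ = t := by group
    rw [h2, h0, eta_self_eq_one cs ht, add_zero]
  have h3 := length_mul_lt_of_eta_eq_one cs (w * t) t h1
  rw [mul_assoc, ht.mul_self, mul_one] at h3
  omega

/-- The (simple, left) strong exchange property. -/
theorem exchange {ω : List B} (_hω : cs.IsReduced ω) (i : B)
    (h : ℓ (s i * π ω) < ℓ (π ω)) :
    ∃ j < ω.length, π (ω.eraseIdx j) = s i * π ω := by
  set w := π ω with hw
  have hlt : ℓ (w⁻¹ * s i) < ℓ w⁻¹ := by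
    have : (w⁻¹ * s i)⁻¹ = s i * w := by
      rw [mul_inv_rev, inv_inv, cs.inv_simple]
    rw [← cs.length_inv (w⁻¹ * s i), this, cs.length_inv w]
    exact h
  have heta : eta cs w⁻¹ (s i) = 1 :=
    eta_eq_one_of_length_mul_lt cs (cs.isReflection_simple i) hlt
  have hrev : π (ω.reverse) = w⁻¹ := by rw [cs.wordProd_reverse]
  have hmem : s i ∈ cs.rightInvSeq ω.reverse := by
    apply mem_rightInvSeq_of_eta_eq_one cs ω.reverse
    rw [hrev]
    exact heta
  rw [cs.rightInvSeq_reverse, List.mem_reverse] at hmem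
  obtain ⟨j, hj, hjt⟩ := List.getElem_of_mem hmem
  have hjlen : j < ω.length := by rwa [cs.length_leftInvSeq] at hj
  refine ⟨j, hjlen, ?_⟩
  have hgetD : (cs.leftInvSeq ω).getD j 1 = s i := by
    rw [List.getD_eq_getElem _ _ hj, hjt]
  have hkey := cs.getD_leftInvSeq_mul_wordProd ω j
  rw [hgetD] at hkey
  rw [← hkey]

/-! ### List lemmas -/

theorem my_map_eraseIdx {A C : Type*} (f : A → C) :
    ∀ (l : List A) (k : ℕ), (l.eraseIdx k).map f = (l.map f).eraseIdx k := by
  intro l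
  induction l with
  | nil => intro k; simp
  | cons a l ih =>
    intro k
    cases k with
    | zero => simp
    | succ k => simp [List.eraseIdx_cons_succ, ih k]

theorem enumFrom_fst_bounds {C : Type*} :
    ∀ (Q : List C) (n : ℕ) (x : C × ℕ), x ∈ Q.zipIdx n → n ≤ x.2 ∧ x.2 < n + Q.length := by
  intro Q
  induction Q with
  | nil => intro n x hx; simp at hx
  | cons a Q ih =>
    intro n x hx
    rw [List.zipIdx_cons, List.mem_cons] at hx
    rcases hx with hx | hx
    · subst hx
      simp only [List.length_cons]
      omega
    · have := ih (n+1) x hx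
      simp only [List.length_cons]
      omega

theorem enumFrom_fst_nodup {C : Type*} :
    ∀ (Q : List C) (n : ℕ), ((Q.zipIdx n).map Prod.snd).Nodup := by
  intro Q
  induction Q with
  | nil => intro n; simp
  | cons a Q ih =>
    intro n
    rw [List.zipIdx_cons, List.map_cons, List.nodup_cons]
    refine ⟨?_, ih (n+1)⟩
    intro hmem
    rw [List.mem_map] at hmem
    obtain ⟨x, hx, hx1⟩ := hmem
    have := enumFrom_fst_bounds Q (n+1) x hx
    omega

theorem shiftFilter {C : Type*} :
    ∀ (Q : List C) (n : ℕ) (p q : ℕ → Bool), (∀ i, n ≤ i → p (i+1) = q i) →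
    ((Q.zipIdx (n+1)).filter (fun x => p x.2)).map Prod.fst
      = ((Q.zipIdx n).filter (fun x => q x.2)).map Prod.fst := by
  intro Q
  induction Q with
  | nil => intro n p q h; simp
  | cons a Q ih =>
    intro n p q h
    have htail := ih (n+1) p q (fun i hi => h i (by omega))
    have hp : p (n+1) = q n := h n le_rfl
    rw [List.zipIdx_cons, List.zipIdx_cons, List.filter_cons, List.filter_cons]
    cases hq : q n with
    | false =>
      have hp' : p (n+1) = false := by rw [hp, hq]
      simp only [hp', hq, Bool.false_eq_true, if_false]
      exact htail
    | true =>
      have hp' : p (n+1) = true := by rw [hp, hq]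
      simp only [hp', hq, if_true]
      rw [List.map_cons, List.map_cons, htail]

theorem filter_insert_eraseIdx {C : Type*} :
    ∀ (l : List (C × ℕ)) (S : Finset ℕ), ((l.map Prod.snd).Nodup) →
    ∀ k : ℕ, k < (l.filter (fun x => x.2 ∉ S)).length →
    ∃ m : ℕ, m ∉ S ∧ m ∈ l.map Prod.snd ∧
      l.filter (fun x => x.2 ∉ insert m S) = (l.filter (fun x => x.2 ∉ S)).eraseIdx k := by
  intro l
  induction l with
  | nil => intro S _ k hk; simp at hk
  | cons a l ih =>
    intro S hnd k hk
    rw [List.map_cons, List.nodup_cons] at hnd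
    obtain ⟨ha, hnd'⟩ := hnd
    by_cases haS : a.2 ∈ S
    · -- head filtered out in both
      rw [List.filter_cons_of_neg (by simpa using haS)] at hk ⊢
      obtain ⟨m, hmS, hml, heq⟩ := ih S hnd' k hk
      refine ⟨m, hmS, List.mem_cons_of_mem _ hml, ?_⟩
      rw [List.filter_cons_of_neg (by simp [Finset.mem_insert, haS]), heq]
    · rw [List.filter_cons_of_pos (by simpa using haS)] at hk ⊢
      cases k with
      | zero =>
        refine ⟨a.2, haS, List.mem_cons_self, ?_⟩
        rw [List.filter_cons_of_neg (by simp), List.eraseIdx_cons_zero]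
        apply List.filter_congr
        intro x hx
        have hxa : x.2 ≠ a.2 := by
          intro hcon
          exact ha (hcon ▸ List.mem_map_of_mem (f := Prod.snd) hx)
        simp [Finset.mem_insert, hxa]
      | succ k =>
        rw [List.length_cons] at hk
        obtain ⟨m, hmS, hml, heq⟩ := ih S hnd' k (by omega)
        have hma : m ≠ a.2 := by
          intro hcon
          exact ha (hcon ▸ hml)
        refine ⟨m, hmS, List.mem_cons_of_mem _ hml, ?_⟩
        rw [List.filter_cons_of_pos (by simp [Finset.mem_insert, haS, Ne.symm hma]),
          List.eraseIdx_cons_succ, heq]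

/-! ### subwordDel lemmas -/

theorem subwordDel_cons {C : Type*} (q : C) (Q' : List C) (I K : Finset ℕ)
    (h : ∀ i : ℕ, 1 ≤ i → (i+1 ∈ I ↔ i ∈ K)) :
    subwordDel (q :: Q') I = (if 1 ∈ I then ([] : List C) else [q]) ++ subwordDel Q' K := by
  unfold subwordDel
  rw [List.zipIdx_cons, List.filter_cons]
  have htail : ((Q'.zipIdx (1+1)).filter (fun p => p.2 ∉ I)).map Prod.fst
      = ((Q'.zipIdx 1).filter (fun p => p.2 ∉ K)).map Prod.fst := by
    exact shiftFilter Q' 1 (fun i => decide (i ∉ I)) (fun i => decide (i ∉ K))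
      (fun i hi => by simp only [decide_eq_decide]; rw [h i hi])
  by_cases h1 : (1:ℕ) ∈ I
  · rw [if_pos h1, List.nil_append]
    rw [if_neg (by simpa using h1)]
    exact htail
  · rw [if_neg h1]
    rw [if_pos (by simpa using h1)]
    rw [List.map_cons]
    rw [htail]
    rfl

theorem subwordDel_insert {C : Type*} (Q : List C) (S : Finset ℕ) (k : ℕ)
    (hk : k < (subwordDel Q S).length) :
    ∃ m : ℕ, m ∉ S ∧ m ∈ Finset.Icc 1 Q.length ∧
      subwordDel Q (insert m S) = (subwordDel Q S).eraseIdx k := by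
  have hnd := enumFrom_fst_nodup Q 1
  have hk' : k < ((Q.zipIdx 1).filter (fun p => p.2 ∉ S)).length := by
    rw [subwordDel, List.length_map] at hk
    exact hk
  obtain ⟨m, hmS, hml, heq⟩ := filter_insert_eraseIdx (Q.zipIdx 1) S hnd k hk'
  refine ⟨m, hmS, ?_, ?_⟩
  · rw [List.mem_map] at hml
    obtain ⟨x, hx, rfl⟩ := hml
    have := enumFrom_fst_bounds Q 1 x hx
    rw [Finset.mem_Icc]
    omega
  · show ((Q.zipIdx 1).filter (fun p => p.2 ∉ insert m S)).map Prod.fst = _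
    rw [heq, my_map_eraseIdx]
    rfl

/-! ### Facet analysis -/

theorem cons_data {q1 : B} {ω : List B} {π_ : W} (hred : cs.IsReduced (q1 :: ω))
    (hprod : π (q1 :: ω) = π_) :
    cs.IsReduced ω ∧ π ω = s q1 * π_ ∧ ℓ (s q1 * π_) < ℓ π_ := by
  have hπω : π ω = s q1 * π_ := by
    rw [← hprod, cs.wordProd_cons, cs.simple_mul_simple_cancel_left]
  have hlen : ℓ π_ = ω.length + 1 := by
    rw [← hprod]
    have := hred
    rw [CoxeterSystem.IsReduced] at this
    rw [this, List.length_cons]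
  have h1 : ℓ (π ω) ≤ ω.length := cs.length_wordProd_le ω
  have h2 : ℓ π_ ≤ 1 + ℓ (π ω) := by
    rw [← hprod, cs.wordProd_cons]
    calc ℓ (s q1 * π ω) ≤ ℓ (s q1) + ℓ (π ω) := cs.length_mul_le _ _
      _ = 1 + ℓ (π ω) := by rw [cs.length_simple]
  have hredω : ℓ (π ω) = ω.length := by omega
  refine ⟨hredω, hπω, ?_⟩
  rw [← hπω, hredω]
  omega

theorem cons_of_data {q1 : B} {ω : List B} {π_ : W} (hred : cs.IsReduced ω)
    (hprod : π ω = s q1 * π_) (hlt : ℓ (s q1 * π_) < ℓ π_) :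
    cs.IsReduced (q1 :: ω) ∧ π (q1 :: ω) = π_ := by
  have hprod' : π (q1 :: ω) = π_ := by
    rw [cs.wordProd_cons, hprod, cs.simple_mul_simple_cancel_left]
  refine ⟨?_, hprod'⟩
  have hor := cs.length_simple_mul π_ q1
  have hlen : ℓ (s q1 * π_) + 1 = ℓ π_ := hor.resolve_left (by omega)
  rw [CoxeterSystem.IsReduced, hprod', List.length_cons]
  rw [CoxeterSystem.IsReduced] at hred
  rw [hprod] at hred
  omega

theorem facet_analysis {q1 : B} {Q' : List B} {π_ : W} {I : Finset ℕ}
    (hF : IsSCFacet cs (q1 :: Q') π_ I) :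
    ((I.erase 1).image (· - 1)) ⊆ Finset.Icc 1 Q'.length ∧
    (1 ∈ I → IsSCFacet cs Q' π_ ((I.erase 1).image (· - 1))) ∧
    (1 ∉ I → ℓ (s q1 * π_) < ℓ π_ ∧
      IsSCFacet cs Q' (s q1 * π_) ((I.erase 1).image (· - 1))) := by
  obtain ⟨hIcc, hred, hprod⟩ := hF
  set K := (I.erase 1).image (· - 1) with hK
  have hmemK : ∀ i : ℕ, i ∈ K ↔ (2 ≤ i + 1 ∧ i + 1 ∈ I) := by
    intro i
    rw [hK]
    simp only [Finset.mem_image, Finset.mem_erase]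
    constructor
    · rintro ⟨j, ⟨hj1, hjI⟩, rfl⟩
      have hjb := hIcc hjI
      rw [Finset.mem_Icc] at hjb
      have : j - 1 + 1 = j := by omega
      rw [this]
      refine ⟨by omega, hjI⟩
    · rintro ⟨hi2, hiI⟩
      exact ⟨i + 1, ⟨by omega, hiI⟩, by omega⟩
  have hshift : ∀ i : ℕ, 1 ≤ i → (i + 1 ∈ I ↔ i ∈ K) := by
    intro i hi
    rw [hmemK i]
    constructor
    · intro h
      exact ⟨by omega, h⟩
    · rintro ⟨_, h⟩
      exact h
  have hKIcc : K ⊆ Finset.Icc 1 Q'.length := by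
    intro i hiK
    rw [hmemK i] at hiK
    have := hIcc hiK.2
    rw [Finset.mem_Icc, List.length_cons] at this
    rw [Finset.mem_Icc]
    omega
  have hdel := subwordDel_cons q1 Q' I K hshift
  refine ⟨hKIcc, ?_, ?_⟩
  · intro h1I
    rw [if_pos h1I, List.nil_append] at hdel
    rw [hdel] at hred hprod
    exact ⟨hKIcc, hred, hprod⟩
  · intro h1I
    rw [if_neg h1I] at hdel
    have hdel' : subwordDel (q1 :: Q') I = q1 :: subwordDel Q' K := hdel
    rw [hdel'] at hred hprod
    obtain ⟨hredK, hprodK, hlt⟩ := cons_data cs hred hprod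
    exact ⟨hlt, hKIcc, hredK, hprodK⟩

theorem facet_descent_extend {q1 : B} {Q' : List B} {π_ : W} {F0 : Finset ℕ}
    (hF : IsSCFacet cs Q' π_ F0) (hdesc : ℓ (s q1 * π_) < ℓ π_) :
    ∃ F : Finset ℕ, IsSCFacet cs Q' (s q1 * π_) F ∧ F0 ⊆ F := by
  obtain ⟨hIcc, hred, hprod⟩ := hF
  obtain ⟨j, hjlen, hj⟩ := exchange cs hred q1 (by rw [hprod]; exact hdesc)
  rw [hprod] at hj
  obtain ⟨m, hmF0, hmIcc, heq⟩ := subwordDel_insert Q' F0 j hjlen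
  refine ⟨insert m F0, ⟨?_, ?_, ?_⟩, Finset.subset_insert m F0⟩
  · rw [Finset.insert_subset_iff]
    exact ⟨hmIcc, hIcc⟩
  · rw [CoxeterSystem.IsReduced, heq, hj]
    have hlenω : (subwordDel Q' F0).length = ℓ π_ := by
      rw [CoxeterSystem.IsReduced] at hred
      rw [← hred, hprod]
    have hor := cs.length_simple_mul π_ q1
    have hlen' : ℓ (s q1 * π_) + 1 = ℓ π_ := hor.resolve_left (by omega)
    rw [← List.length_eraseIdx_add_one hjlen] at hlenω
    omega
  · rw [heq, hj]

theorem shift_up_shift {F : Finset ℕ} :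
    ∀ i : ℕ, (i + 1 ∈ F.image (· + 1) ↔ i ∈ F) := by
  intro i
  simp only [Finset.mem_image]
  constructor
  · rintro ⟨a, ha, haeq⟩
    have : a = i := by omega
    subst this
    exact ha
  · intro h
    exact ⟨i, h, rfl⟩

theorem one_not_mem_shift_up {F : Finset ℕ} {n : ℕ} (hF : F ⊆ Finset.Icc 1 n) :
    1 ∉ F.image (· + 1) := by
  rw [Finset.mem_image]
  rintro ⟨a, ha, haeq⟩
  have := hF ha
  rw [Finset.mem_Icc] at this
  omega

theorem shift_up_Icc {F : Finset ℕ} {n : ℕ} (hF : F ⊆ Finset.Icc 1 n) :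
    F.image (· + 1) ⊆ Finset.Icc 1 (n + 1) := by
  intro m hm
  rw [Finset.mem_image] at hm
  obtain ⟨a, ha, rfl⟩ := hm
  have := hF ha
  rw [Finset.mem_Icc] at this ⊢
  omega

theorem image_sub_add {J : Finset ℕ} (hJ : ∀ j ∈ J, 2 ≤ j) :
    (J.image (· - 1)).image (· + 1) = J := by
  ext m
  simp only [Finset.mem_image]
  constructor
  · rintro ⟨i, ⟨j, hj, rfl⟩, rfl⟩
    have := hJ j hj
    have hje : j - 1 + 1 = j := by omega
    rw [hje]
    exact hj
  · intro hm
    have := hJ m hm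
    exact ⟨m - 1, ⟨m, hm, rfl⟩, by omega⟩

theorem facet_lift_mem {q1 : B} {Q' : List B} {π_ : W} {F : Finset ℕ}
    (hF : IsSCFacet cs Q' π_ F) :
    IsSCFacet cs (q1 :: Q') π_ (insert 1 (F.image (· + 1))) := by
  obtain ⟨hIcc, hred, hprod⟩ := hF
  set I := insert 1 (F.image (· + 1)) with hI
  have hshift : ∀ i : ℕ, 1 ≤ i → (i + 1 ∈ I ↔ i ∈ F) := by
    intro i hi
    rw [hI, Finset.mem_insert]
    rw [← shift_up_shift (F := F) i]
    constructor
    · rintro (h | h)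
      · omega
      · exact h
    · intro h
      exact Or.inr h
  have hdel := subwordDel_cons q1 Q' I F hshift
  rw [if_pos (Finset.mem_insert_self 1 _), List.nil_append] at hdel
  refine ⟨?_, ?_, ?_⟩
  · rw [hI, Finset.insert_subset_iff, List.length_cons]
    constructor
    · rw [Finset.mem_Icc]
      omega
    · exact shift_up_Icc hIcc
  · rw [hdel]
    exact hred
  · rw [hdel]
    exact hprod

theorem facet_lift_notmem {q1 : B} {Q' : List B} {π_ : W} {F : Finset ℕ}
    (hF : IsSCFacet cs Q' (s q1 * π_) F) (hdesc : ℓ (s q1 * π_) < ℓ π_) :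
    IsSCFacet cs (q1 :: Q') π_ (F.image (· + 1)) := by
  obtain ⟨hIcc, hred, hprod⟩ := hF
  have hshift : ∀ i : ℕ, 1 ≤ i → (i + 1 ∈ F.image (· + 1) ↔ i ∈ F) :=
    fun i _ => shift_up_shift i
  have hdel := subwordDel_cons q1 Q' (F.image (· + 1)) F hshift
  rw [if_neg (one_not_mem_shift_up hIcc)] at hdel
  have hdel' : subwordDel (q1 :: Q') (F.image (· + 1)) = q1 :: subwordDel Q' F := hdel
  obtain ⟨hred', hprod'⟩ := cons_of_data cs hred hprod hdesc
  refine ⟨?_, ?_, ?_⟩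
  · rw [List.length_cons]
    exact shift_up_Icc hIcc
  · rw [hdel']
    exact hred'
  · rw [hdel']
    exact hprod'

end SCAux

/-- if `{1}` is a vertex of `SC(Q, π)` with `Q = q₁ :: Q'`, then the
deletion of vertex `1` from `SC(Q, π)` is isomorphic (via shifting positions by one) to
`SC(Q', π)` if `ℓ(q₁π) > ℓ(π)`, and to `SC(Q', q₁π)` if `ℓ(q₁π) < ℓ(π)`. -/
theorem stmt_7 {B W : Type*} [Group W] {M : CoxeterMatrix B} (cs : CoxeterSystem M W)
    (q1 : B) (Q' : List B) (π : W)
    (hv : ({1} : Finset ℕ) ∈ subwordCpx cs (q1 :: Q') π) :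
    (cs.length π < cs.length (cs.simple q1 * π) →
      ∀ J : Finset ℕ, (J ∈ subwordCpx cs (q1 :: Q') π ∧ 1 ∉ J) ↔
        ∃ K ∈ subwordCpx cs Q' π, J = K.image (· + 1)) ∧
    (cs.length (cs.simple q1 * π) < cs.length π →
      ∀ J : Finset ℕ, (J ∈ subwordCpx cs (q1 :: Q') π ∧ 1 ∉ J) ↔
        ∃ K ∈ subwordCpx cs Q' (cs.simple q1 * π), J = K.image (· + 1)) := by
  clear hv
  constructor
  · -- ascent case
    intro hasc J
    constructor
    · rintro ⟨⟨I, hF, hJI⟩, h1J⟩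
      have hfa := SCAux.facet_analysis cs hF
      by_cases h1I : 1 ∈ I
      · have hfacet := hfa.2.1 h1I
        have hJ2 : ∀ j ∈ J, 2 ≤ j := by
          intro j hj
          have hb := hF.1 (hJI hj)
          rw [Finset.mem_Icc] at hb
          have hne : j ≠ 1 := fun hc => h1J (hc ▸ hj)
          omega
        refine ⟨J.image (· - 1), ⟨(I.erase 1).image (· - 1), hfacet, ?_⟩,
          (SCAux.image_sub_add hJ2).symm⟩
        exact Finset.image_subset_image (Finset.subset_erase.mpr ⟨hJI, h1J⟩)
      · exact absurd (hfa.2.2 h1I).1 (by omega)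
    · rintro ⟨K, ⟨F, hF, hKF⟩, rfl⟩
      have hKIcc : K ⊆ Finset.Icc 1 Q'.length := hKF.trans hF.1
      refine ⟨⟨insert 1 (F.image (· + 1)), SCAux.facet_lift_mem cs hF, ?_⟩,
        SCAux.one_not_mem_shift_up hKIcc⟩
      exact (Finset.image_subset_image hKF).trans (Finset.subset_insert _ _)
  · -- descent case
    intro hdesc J
    constructor
    · rintro ⟨⟨I, hF, hJI⟩, h1J⟩
      have hfa := SCAux.facet_analysis cs hF
      have hJ2 : ∀ j ∈ J, 2 ≤ j := by
        intro j hj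
        have hb := hF.1 (hJI hj)
        rw [Finset.mem_Icc] at hb
        have hne : j ≠ 1 := fun hc => h1J (hc ▸ hj)
        omega
      have hJsub : J.image (· - 1) ⊆ (I.erase 1).image (· - 1) :=
        Finset.image_subset_image (Finset.subset_erase.mpr ⟨hJI, h1J⟩)
      by_cases h1I : 1 ∈ I
      · have hfacet := hfa.2.1 h1I
        obtain ⟨F, hFfacet, hsub⟩ := SCAux.facet_descent_extend cs hfacet hdesc
        exact ⟨J.image (· - 1), ⟨F, hFfacet, hJsub.trans hsub⟩,
          (SCAux.image_sub_add hJ2).symm⟩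
      · exact ⟨J.image (· - 1), ⟨(I.erase 1).image (· - 1), (hfa.2.2 h1I).2, hJsub⟩,
          (SCAux.image_sub_add hJ2).symm⟩
    · rintro ⟨K, ⟨F, hF, hKF⟩, rfl⟩
      have hKIcc : K ⊆ Finset.Icc 1 Q'.length := hKF.trans hF.1
      refine ⟨⟨F.image (· + 1), SCAux.facet_lift_notmem cs hF hdesc, ?_⟩,
        SCAux.one_not_mem_shift_up hKIcc⟩
      exact Finset.image_subset_image hKF
end

section
/- Let SC(Q, π) be a spherical subword complex, I a face with |I| ≥ 2, and i ∈ I. Then the link of the vertex i in the costar of I in SC(Q, π) equals the costar of I \ {i} in the subword complex SC(Q \ q_i, π), where Q \ q_i is Q with the letter at position i deleted (faces identified as subsets of positions other than i). -/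
def sh (i j : ℕ) : ℕ := if j < i then j else j - 1

def unsh (i j : ℕ) : ℕ := if j < i then j else j + 1

lemma sh_unsh (i j : ℕ) : sh i (unsh i j) = j := by
  simp only [sh, unsh]; split_ifs <;> omega

lemma unsh_sh (i j : ℕ) (hj : j ≠ i) : unsh i (sh i j) = j := by
  simp only [sh, unsh]; split_ifs <;> omega

lemma sh_inj (i a b : ℕ) (ha : a ≠ i) (hb : b ≠ i) (hab : sh i a = sh i b) : a = b := by
  simp only [sh] at hab; split_ifs at hab <;> omega

lemma mem_shiftImage (F : Finset ℕ) (i p : ℕ) :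
    p ∈ (F.erase i).image (sh i) ↔ (if p < i then p ∈ F else p + 1 ∈ F) := by
  simp only [Finset.mem_image, Finset.mem_erase]
  split
  · case isTrue hp =>
    constructor
    · rintro ⟨j, ⟨hji, hjF⟩, hj⟩
      have : j = p := by simp only [sh] at hj; split_ifs at hj <;> omega
      exact this ▸ hjF
    · intro hpF
      exact ⟨p, ⟨by omega, hpF⟩, by simp [sh, hp]⟩
  · case isFalse hp =>
    constructor
    · rintro ⟨j, ⟨hji, hjF⟩, hj⟩
      have : j = p + 1 := by simp only [sh] at hj; split_ifs at hj <;> omega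
      exact this ▸ hjF
    · intro hpF
      exact ⟨p + 1, ⟨by omega, hpF⟩, by simp only [sh]; split_ifs <;> omega⟩

lemma filter_high {B : Type*} (i : ℕ) (F : Finset ℕ) (Q : List B) :
    ∀ s : ℕ, i ≤ s →
    ((Q.zipIdx (s+1)).filter (fun p => p.2 ∉ F)).map Prod.fst =
    ((Q.zipIdx s).filter (fun p => p.2 ∉ (F.erase i).image (sh i))).map Prod.fst := by
  induction Q with
  | nil => intro s _; simp
  | cons q T ih =>
    intro s hs
    have hmem : s ∈ (F.erase i).image (sh i) ↔ s + 1 ∈ F := by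
      rw [mem_shiftImage]; simp [show ¬ s < i by omega]
    by_cases h : s + 1 ∈ F
    · simp only [List.zipIdx, List.filter_cons, h, hmem.2 h]
      simpa using ih (s+1) (by omega)
    · simp only [List.zipIdx, List.filter_cons, h, show s ∉ (F.erase i).image (sh i) from fun c => h (hmem.1 c)]
      rw [if_pos (by simp), if_pos (by simp)]
      simp only [List.map_cons]
      rw [ih (s+1) (by omega)]

lemma filter_low {B : Type*} (i : ℕ) (F : Finset ℕ) (hiF : i ∈ F) (Q : List B) :
    ∀ s : ℕ, s ≤ i →
    ((Q.zipIdx s).filter (fun p => p.2 ∉ F)).map Prod.fst =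
    (((Q.eraseIdx (i - s)).zipIdx s).filter (fun p => p.2 ∉ (F.erase i).image (sh i))).map Prod.fst := by
  induction Q with
  | nil => intro s _; simp
  | cons q T ih =>
    intro s hs
    by_cases h : s = i
    · have hsF : s ∈ F := h ▸ hiF
      simp only [show i - s = 0 by omega, List.eraseIdx_cons_zero, List.zipIdx, List.filter_cons]
      rw [if_neg (by simp [hsF])]
      exact filter_high i F T s (by omega)
    · have h1 : i - s = (i - (s + 1)) + 1 := by omega
      have hmem : s ∈ (F.erase i).image (sh i) ↔ s ∈ F := by
        rw [mem_shiftImage]; simp [show s < i by omega]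
      rw [h1, List.eraseIdx_cons_succ]
      by_cases hsF : s ∈ F
      · simp only [List.zipIdx, List.filter_cons, hsF, hmem.2 hsF]
        rw [if_neg (by simp), if_neg (by simp)]
        exact ih (s+1) (by omega)
      · have hsF' : s ∉ Finset.image (sh i) (F.erase i) := fun c => hsF (hmem.1 c)
        simp only [List.zipIdx, List.filter_cons]
        rw [if_pos (by simp [hsF]), if_pos (by simp [hsF'])]
        simp only [List.map_cons]
        rw [ih (s+1) (by omega)]

lemma subwordDel_eraseIdx {B : Type*} (Q : List B) (F : Finset ℕ) (i : ℕ)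
    (hi1 : 1 ≤ i) (hiF : i ∈ F) :
    subwordDel Q F = subwordDel (Q.eraseIdx (i - 1)) ((F.erase i).image (sh i)) :=
  filter_low i F hiF Q 1 hi1


/-- for a spherical subword complex, a face `I` with `|I| ≥ 2` and `i ∈ I`,
the link of the vertex `i` in the costar of `I` equals the costar of `I \ {i}` in
`SC(Q \ qᵢ, π)`, where positions `j ≠ i` of `Q` are identified with positions of
`Q \ qᵢ` via `j ↦ j` for `j < i` and `j ↦ j - 1` for `j > i`. -/
theorem stmt_10 {B W : Type*} [Group W] {M : CoxeterMatrix B} (cs : CoxeterSystem M W)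
    (Q : List B) (π : W) (hsph : Dem cs Q = π) (I : Finset ℕ)
    (hI : I ∈ subwordCpx cs Q π) (hcard : 2 ≤ I.card) (i : ℕ) (hi : i ∈ I) :
    ∀ J : Finset ℕ, i ∉ J →
      (insert i J ∈ subwordCostar cs Q π I ↔
        J.image (fun j => if j < i then j else j - 1) ∈
          subwordCostar cs (Q.eraseIdx (i - 1)) π
            ((I.erase i).image (fun j => if j < i then j else j - 1))) := by
  intro J hiJ
  have hshfun : (fun j => if j < i then j else j - 1) = sh i := rfl
  rw [hshfun]
  obtain ⟨F₀, hF₀, hIF₀⟩ := hI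
  have hiIcc := hF₀.1 (hIF₀ hi)
  rw [Finset.mem_Icc] at hiIcc
  obtain ⟨hi1, hiQ⟩ := hiIcc
  have hQ'len : (Q.eraseIdx (i - 1)).length = Q.length - 1 := by
    rw [List.length_eraseIdx, if_pos (by omega)]
  constructor
  · rintro ⟨F, hF, hJF, hIF⟩
    have hiF : i ∈ F := hJF (Finset.mem_insert_self i J)
    refine ⟨(F.erase i).image (sh i), ⟨?_, ?_, ?_⟩, ?_, ?_⟩
    · intro p hp
      rw [mem_shiftImage] at hp
      rw [Finset.mem_Icc, hQ'len]
      split_ifs at hp with h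
      · have := Finset.mem_Icc.1 (hF.1 hp); omega
      · have := Finset.mem_Icc.1 (hF.1 hp); omega
    · rw [← subwordDel_eraseIdx Q F i hi1 hiF]; exact hF.2.1
    · rw [← subwordDel_eraseIdx Q F i hi1 hiF]; exact hF.2.2
    · refine Finset.image_subset_image ?_
      intro j hj
      exact Finset.mem_erase.2 ⟨fun c => hiJ (c ▸ hj), hJF (Finset.mem_insert_of_mem hj)⟩
    · intro hsub
      obtain ⟨k, hkI, hkF⟩ := Finset.not_subset.1 hIF
      have hki : k ≠ i := fun c => hkF (c ▸ hiF)
      have : sh i k ∈ (F.erase i).image (sh i) :=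
        hsub (Finset.mem_image_of_mem _ (Finset.mem_erase.2 ⟨hki, hkI⟩))
      obtain ⟨j, hj, hjk⟩ := Finset.mem_image.1 this
      have hj' := Finset.mem_erase.1 hj
      exact hkF (sh_inj i j k hj'.1 hki hjk ▸ hj'.2)
  · rintro ⟨F', hF', hJF', hIF'⟩
    have hiF'im : i ∉ F'.image (unsh i) := by
      rintro c
      obtain ⟨j, _, hj⟩ := Finset.mem_image.1 c
      simp only [unsh] at hj; split_ifs at hj <;> omega
    set F : Finset ℕ := insert i (F'.image (unsh i)) with hFdef
    have hiF : i ∈ F := Finset.mem_insert_self _ _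
    have herase : F.erase i = F'.image (unsh i) := by
      rw [hFdef, Finset.erase_insert hiF'im]
    have himg : (F.erase i).image (sh i) = F' := by
      rw [herase, Finset.image_image]
      refine Finset.ext fun a => ?_
      simp [Function.comp_def, sh_unsh]
    refine ⟨F, ⟨?_, ?_, ?_⟩, ?_, ?_⟩
    · intro p hp
      rw [hFdef] at hp
      rcases Finset.mem_insert.1 hp with h | h
      · subst h; exact Finset.mem_Icc.2 ⟨hi1, hiQ⟩
      · obtain ⟨j, hj, hjp⟩ := Finset.mem_image.1 h
        have := Finset.mem_Icc.1 (hF'.1 hj)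
        rw [hQ'len] at this
        rw [Finset.mem_Icc]
        subst hjp
        simp only [unsh]; split_ifs <;> omega
    · rw [subwordDel_eraseIdx Q F i hi1 hiF, himg]; exact hF'.2.1
    · rw [subwordDel_eraseIdx Q F i hi1 hiF, himg]; exact hF'.2.2
    · intro j hj
      rcases Finset.mem_insert.1 hj with h | h
      · exact h ▸ hiF
      · have hji : j ≠ i := fun c => hiJ (c ▸ h)
        have : sh i j ∈ F' := hJF' (Finset.mem_image_of_mem _ h)
        have : unsh i (sh i j) ∈ F'.image (unsh i) := Finset.mem_image_of_mem _ this
        rw [unsh_sh i j hji] at this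
        exact hFdef ▸ Finset.mem_insert_of_mem this
    · intro hsub
      obtain ⟨p, hpI', hpF'⟩ := Finset.not_subset.1 hIF'
      obtain ⟨k, hk, hkp⟩ := Finset.mem_image.1 hpI'
      have hk' := Finset.mem_erase.1 hk
      have hkF : k ∈ F := hsub hk'.2
      rcases Finset.mem_insert.1 (hFdef ▸ hkF) with h | h
      · exact hk'.1 h
      · obtain ⟨j, hj, hjk⟩ := Finset.mem_image.1 h
        apply hpF'
        rw [← hkp, ← hjk, sh_unsh]
        exact hj
end
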